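/- arXiv:2110.13405 — 12 statements merged into one kernel-verified Lean document; each statement's English description precedes it below -/
import Mathlib

section
/- For all integers x, one has Δ(x) = −Δ(N_0 − x). -/
/-- Ceiling of an integer over a positive integer, as an ediv. -/
lemma ceil_int_div_eq (a k : ℤ) (ha : 0 < a) :
    ⌈(k : ℚ) / (a : ℚ)⌉ = -((-k) / a) := by
  have h1 : ((k : ℚ) / (a : ℚ)) = -(((-k : ℤ) : ℚ) / ((a.toNat : ℕ) : ℚ)) := by
    have : ((a.toNat : ℕ) : ℚ) = (a : ℚ) := by
      exact_mod_cast congrArg (Int.cast : ℤ → ℚ) (Int.toNat_of_nonneg ha.le)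
    rw [this]; push_cast; ring
  rw [h1, Int.ceil_neg, Rat.floor_intCast_div_natCast, Int.toNat_of_nonneg ha.le]

/-- Key pairing identity for ceilings. -/
lemma ceil_pair (a m s : ℤ) (ha : 0 < a) :
    ⌈(m : ℚ) / (a : ℚ)⌉ + ⌈((a * s + 1 - m : ℤ) : ℚ) / (a : ℚ)⌉ = s + 1 := by
  rw [ceil_int_div_eq a m ha, ceil_int_div_eq a _ ha]
  set q := (-m) / a with hq
  set r := (-m) % a with hr
  have hqr : a * q + r = -m := Int.mul_ediv_add_emod (-m) a
  have hr0 : 0 ≤ r := Int.emod_nonneg _ (by omega)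
  have hra : r < a := Int.emod_lt_of_pos _ ha
  have h2 : -(a * s + 1 - m) = (a - r - 1) + a * (-q - s - 1) := by linear_combination hqr
  rw [h2, Int.add_mul_ediv_left _ _ (by omega : a ≠ 0),
    Int.ediv_eq_zero_of_lt (by omega) (by omega)]
  ring

/-- For all integers x, Δ(x) = −Δ(N_0 − x). -/
theorem stmt_2 (n : ℕ) (hn : 3 ≤ n) (a : Fin n → ℤ)
    (ha : ∀ i, 2 ≤ a i)
    (hcop : ∀ i j, i ≠ j → IsCoprime (a i) (a j))
    (P : ℤ) (hP : P = ∏ i, a i)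
    (e0 : ℤ) (b : Fin n → ℤ)
    (hb : ∀ i, 1 ≤ b i ∧ b i < a i)
    (heq : e0 * P + ∑ i, b i * (P / a i) = -1)
    (Δ : ℤ → ℤ)
    (hΔ : ∀ x : ℤ, Δ x = 1 + |e0| * x - ∑ i, ⌈(x * b i : ℚ) / (a i : ℚ)⌉)
    (N0 : ℤ) (hN0 : N0 = ((n : ℤ) - 2) * P - ∑ i, P / a i) :
    ∀ x : ℤ, Δ x = -Δ (N0 - x) := by
  have hapos : ∀ i, 0 < a i := fun i => lt_of_lt_of_le two_pos (ha i)
  have hPpos : 0 < P := hP ▸ Finset.prod_pos (fun i _ => hapos i)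
  have hdvdP : ∀ i, a i ∣ P := fun i => hP ▸ Finset.dvd_prod_of_mem a (Finset.mem_univ i)
  set c : Fin n → ℤ := fun i => P / a i with hcdef
  have hc : ∀ i, a i * c i = P := fun i => Int.mul_ediv_cancel' (hdvdP i)
  have hcpos : ∀ i, 0 < c i := by
    intro i
    by_contra h
    push_neg at h
    nlinarith [hc i, hapos i]
  have hca : ∀ i j, i ≠ j → a i ∣ c j := by
    intro i j hij
    exact (hcop i j hij).dvd_of_dvd_mul_left (by rw [hc j]; exact hdvdP i)
  -- a i ∣ b i * c i + 1
  have hdvd1 : ∀ i, a i ∣ b i * c i + 1 := by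
    intro i
    have hsplit : b i * c i + ∑ j ∈ Finset.univ.erase i, b j * c j = ∑ j, b j * c j :=
      Finset.add_sum_erase _ (fun j => b j * c j) (Finset.mem_univ i)
    have h1 : b i * c i + 1 = -(e0 * P) - ∑ j ∈ Finset.univ.erase i, b j * c j := by
      have := heq
      rw [← hsplit] at this
      linarith
    rw [h1]
    exact dvd_sub (dvd_neg.mpr (Dvd.dvd.mul_left (hdvdP i) e0))
      (Finset.dvd_sum fun j hj => (hca i j (Finset.ne_of_mem_erase hj).symm).mul_left _)
  -- a i ∣ N0 + c i
  have hdvdN : ∀ i, a i ∣ N0 + c i := by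
    intro i
    have hsplit : c i + ∑ j ∈ Finset.univ.erase i, c j = ∑ j, c j :=
      Finset.add_sum_erase _ (fun j => c j) (Finset.mem_univ i)
    have h1 : N0 + c i = ((n : ℤ) - 2) * P - ∑ j ∈ Finset.univ.erase i, c j := by
      rw [hN0, ← hsplit]; ring
    rw [h1]
    exact dvd_sub ((hdvdP i).mul_left _)
      (Finset.dvd_sum fun j hj => hca i j (Finset.ne_of_mem_erase hj).symm)
  -- a i ∣ N0 * b i - 1
  have hdvdNb : ∀ i, a i ∣ N0 * b i - 1 := by
    intro i
    have h1 : N0 * b i - 1 = (N0 + c i) * b i - (b i * c i + 1) := by ring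
    rw [h1]
    exact dvd_sub ((hdvdN i).mul_right _) (hdvd1 i)
  choose s hs using fun i => hdvdNb i
  -- sum of s
  have hsum_bc : ∑ i, b i * c i = -1 - e0 * P := by linarith [heq]
  have hsum_c : ∑ i, c i = ((n : ℤ) - 2) * P - N0 := by
    have := hN0; linarith
  have hsum_s : ∑ i, s i = 2 - (n : ℤ) - e0 * N0 := by
    have hPs : P * (∑ i, s i) = P * (2 - (n : ℤ) - e0 * N0) := by
      rw [Finset.mul_sum]
      have h1 : ∀ i ∈ Finset.univ, P * s i = c i * (N0 * b i - 1) := by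
        intro i _
        rw [hs i, ← hc i]; ring
      rw [Finset.sum_congr rfl h1]
      have h2 : ∑ i, c i * (N0 * b i - 1) = N0 * (∑ i, b i * c i) - ∑ i, c i := by
        rw [Finset.mul_sum, ← Finset.sum_sub_distrib]
        exact Finset.sum_congr rfl fun i _ => by ring
      rw [h2, hsum_bc, hsum_c]
      ring
    exact mul_left_cancel₀ (ne_of_gt hPpos) hPs
  -- e0 < 0
  have he0 : e0 < 0 := by
    have hpos : 0 < ∑ i, b i * c i := by
      apply Finset.sum_pos (fun i _ => mul_pos (by linarith [(hb i).1]) (hcpos i))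
      exact ⟨⟨0, by omega⟩, Finset.mem_univ _⟩
    nlinarith [hsum_bc]
  have habs : |e0| = -e0 := abs_of_neg he0
  intro x
  -- pairing of ceilings
  have hpair : ∀ i : Fin n,
      ⌈(x * b i : ℚ) / (a i : ℚ)⌉ + ⌈((N0 - x) * b i : ℚ) / (a i : ℚ)⌉ = s i + 1 := by
    intro i
    have hM : (N0 - x) * b i = a i * s i + 1 - x * b i := by
      have := hs i; nlinarith [hs i]
    have key := ceil_pair (a i) (x * b i) (s i) (hapos i)
    have hc1 : ((N0 - x) * b i : ℚ) = (((a i * s i + 1 - x * b i : ℤ)) : ℚ) := by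
      exact_mod_cast congrArg (Int.cast : ℤ → ℚ) hM
    rw [hc1]
    have hc2 : ((x * b i : ℚ)) = (((x * b i : ℤ)) : ℚ) := by push_cast; ring
    rw [hc2]
    exact key
  have hsumpair : (∑ i, ⌈(x * b i : ℚ) / (a i : ℚ)⌉) +
      (∑ i, ⌈((N0 - x) * b i : ℚ) / (a i : ℚ)⌉) = (∑ i, s i) + n := by
    rw [← Finset.sum_add_distrib]
    rw [Finset.sum_congr rfl (fun i _ => hpair i)]
    rw [Finset.sum_add_distrib]
    simp
  rw [hΔ x, hΔ (N0 - x)]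
  rw [habs]
  have := hsum_s
  push_cast at hsumpair ⊢
  linarith [hsumpair, hsum_s]
end

section
/- For all integers x, one has Δ(x) ≥ 1 if and only if x ∈ G, i.e. if and only if x can be written as Σ_{i=1}^n x_i·(P/a_i) with all x_i nonnegative integers. -/
lemma ceil_helper (m d r : ℤ) (hd : 0 < d) (hr0 : 0 ≤ r) (hr1 : r < d) (hdvd : d ∣ m + r) :
    d * ⌈(m : ℚ) / (d : ℚ)⌉ = m + r := by
  obtain ⟨k, hk⟩ := hdvd
  have hm : m = d * k - r := by linarith
  have hq : ⌈(m : ℚ) / (d : ℚ)⌉ = k := by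
    rw [Int.ceil_eq_iff]
    have hdq : (0 : ℚ) < (d : ℚ) := by exact_mod_cast hd
    constructor
    · rw [lt_div_iff₀ hdq]
      have h : ((k : ℤ) - 1) * d < m := by nlinarith
      exact_mod_cast h
    · rw [div_le_iff₀ hdq]
      have h : m ≤ (k : ℤ) * d := by nlinarith
      exact_mod_cast h
  rw [hq]; linarith

/-- For all integers x, Δ(x) ≥ 1 iff x lies in the numerical semigroup G generated by the P/a_i. -/
theorem stmt_3 (n : ℕ) (hn : 3 ≤ n) (a : Fin n → ℤ)
    (ha : ∀ i, 2 ≤ a i)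
    (hcop : ∀ i j, i ≠ j → IsCoprime (a i) (a j))
    (P : ℤ) (hP : P = ∏ i, a i)
    (e0 : ℤ) (b : Fin n → ℤ)
    (hb : ∀ i, 1 ≤ b i ∧ b i < a i)
    (heq : e0 * P + ∑ i, b i * (P / a i) = -1)
    (Δ : ℤ → ℤ)
    (hΔ : ∀ x : ℤ, Δ x = 1 + |e0| * x - ∑ i, ⌈(x * b i : ℚ) / (a i : ℚ)⌉) :
    ∀ x : ℤ, (1 ≤ Δ x ↔ ∃ c : Fin n → ℕ, x = ∑ i, (c i : ℤ) * (P / a i)) := by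
  classical
  have ha0 : ∀ i, (0 : ℤ) < a i := fun i => lt_of_lt_of_le two_pos (ha i)
  have hPpos : 0 < P := hP ▸ Finset.prod_pos (fun i _ => ha0 i)
  set Q : Fin n → ℤ := fun i => ∏ j ∈ Finset.univ.erase i, a j with hQdef
  have hQ : ∀ i, a i * Q i = P := fun i => by
    rw [hP, hQdef]; exact Finset.mul_prod_erase _ _ (Finset.mem_univ i)
  have hQpos : ∀ i, 0 < Q i := fun i => by
    have := hQ i; nlinarith [ha0 i, hPpos]
  have hdiv : ∀ i, P / a i = Q i := fun i => by
    rw [← hQ i, Int.mul_ediv_cancel_left _ (ne_of_gt (ha0 i))]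
  simp only [hdiv] at heq
  have haP : ∀ i, a i ∣ P := fun i => ⟨Q i, (hQ i).symm⟩
  have hQdvd : ∀ i j, i ≠ j → a i ∣ Q j := fun i j hij => by
    rw [hQdef]
    exact Finset.dvd_prod_of_mem a (Finset.mem_erase.2 ⟨hij, Finset.mem_univ i⟩)
  have hcopQ : ∀ i, IsCoprime (a i) (Q i) := fun i => by
    rw [hQdef]
    exact IsCoprime.prod_right fun j hj => hcop i j (fun h => (Finset.mem_erase.1 hj).1 h.symm)
  -- e0 < 0
  have i0 : Fin n := ⟨0, by omega⟩
  have hBpos : 0 < ∑ i, b i * Q i :=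
    Finset.sum_pos (fun i _ => mul_pos (by linarith [(hb i).1]) (hQpos i)) ⟨i0, Finset.mem_univ i0⟩
  have he0 : e0 < 0 := by
    by_contra h
    push_neg at h
    nlinarith [mul_nonneg h hPpos.le]
  have habs : |e0| = -e0 := abs_of_neg he0
  intro x
  simp only [hdiv]
  set c : Fin n → ℤ := fun i => (-(x * b i)) % a i with hcdef
  have hc0 : ∀ i, 0 ≤ c i := fun i => Int.emod_nonneg _ (ne_of_gt (ha0 i))
  have hc1 : ∀ i, c i < a i := fun i => Int.emod_lt_of_pos _ (ha0 i)
  have hcmod : ∀ i, a i ∣ (x * b i + c i) := fun i =>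
    ⟨-((-(x * b i)) / a i), by rw [hcdef]; simp only [Int.emod_def]; ring⟩
  have hceil : ∀ i, a i * ⌈(x * b i : ℚ) / (a i : ℚ)⌉ = x * b i + c i := fun i => by
    have := ceil_helper (x * b i) (a i) (c i) (ha0 i) (hc0 i) (hc1 i) (hcmod i)
    exact_mod_cast this
  have hsum : P * ∑ i, ⌈(x * b i : ℚ) / (a i : ℚ)⌉
      = x * (∑ i, b i * Q i) + ∑ i, c i * Q i := by
    rw [Finset.mul_sum, Finset.mul_sum, ← Finset.sum_add_distrib]
    refine Finset.sum_congr rfl fun i _ => ?_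
    linear_combination Q i * hceil i - ⌈(x * b i : ℚ) / (a i : ℚ)⌉ * hQ i
  have h1 := hΔ x
  rw [habs] at h1
  have hmain : x = (∑ i, c i * Q i) + (Δ x - 1) * P := by
    linear_combination (-P) * h1 + hsum + x * heq
  -- congruence: a i ∣ x - c i * Q i
  have hbQ : ∀ i, a i ∣ 1 + b i * Q i := by
    intro i
    have he := Finset.add_sum_erase Finset.univ (fun j => b j * Q j) (Finset.mem_univ i)
    have h2 : (1 : ℤ) + b i * Q i = -(e0 * P) - ∑ j ∈ Finset.univ.erase i, b j * Q j := by
      linear_combination he + heq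
    rw [h2]
    exact dvd_sub (dvd_neg.2 ((haP i).mul_left e0))
      (Finset.dvd_sum fun j hj =>
        ((hQdvd i j fun h => (Finset.mem_erase.1 hj).1 h.symm).mul_left _))
  have hxc : ∀ i, a i ∣ x - c i * Q i := by
    intro i
    have h3 : x - c i * Q i = x * (1 + b i * Q i) - (x * b i + c i) * Q i := by ring
    rw [h3]
    exact dvd_sub ((hbQ i).mul_left x) ((hcmod i).mul_right (Q i))
  constructor
  · intro hx1
    have hm0 : 0 ≤ Δ x - 1 := by omega
    refine ⟨fun i => if i = i0 then (c i + (Δ x - 1) * a i).toNat else (c i).toNat, ?_⟩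
    have hcast : ∀ i, ((if i = i0 then (c i + (Δ x - 1) * a i).toNat else (c i).toNat : ℕ) : ℤ)
        = c i + (if i = i0 then (Δ x - 1) * a i else 0) := by
      intro i
      split
      · rw [Int.toNat_of_nonneg (add_nonneg (hc0 i) (mul_nonneg hm0 (ha0 i).le))]
      · rw [Int.toNat_of_nonneg (hc0 i), add_zero]
    calc x = (∑ i, c i * Q i) + (Δ x - 1) * P := hmain
      _ = ∑ i, (c i * Q i + (if i = i0 then (Δ x - 1) * a i else 0) * Q i) := by
          rw [Finset.sum_add_distrib]
          congr 1
          simp only [ite_mul, zero_mul, Finset.sum_ite_eq', Finset.mem_univ, if_true]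
          rw [mul_assoc, hQ i0]
      _ = ∑ i, ((if i = i0 then (c i + (Δ x - 1) * a i).toNat else (c i).toNat : ℕ) : ℤ) * Q i := by
          refine Finset.sum_congr rfl fun i _ => ?_
          rw [hcast i]; ring
  · rintro ⟨c', hx⟩
    have hdvd2 : ∀ i, a i ∣ ((c' i : ℤ) - c i) := by
      intro i
      have he := Finset.add_sum_erase Finset.univ (fun j => (c' j : ℤ) * Q j) (Finset.mem_univ i)
      have h4 : ((c' i : ℤ) - c i) * Q i
          = (x - c i * Q i) - ∑ j ∈ Finset.univ.erase i, (c' j : ℤ) * Q j := by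
        rw [hx]; linear_combination he
      have h5 : a i ∣ ((c' i : ℤ) - c i) * Q i := by
        rw [h4]
        exact dvd_sub (hxc i)
          (Finset.dvd_sum fun j hj =>
            ((hQdvd i j fun h => (Finset.mem_erase.1 hj).1 h.symm).mul_left _))
      exact (hcopQ i).dvd_of_dvd_mul_right h5
    have hge : ∀ i, 0 ≤ (c' i : ℤ) - c i := by
      intro i
      obtain ⟨d, hd⟩ := hdvd2 i
      have hcn : (0 : ℤ) ≤ (c' i : ℤ) := Int.natCast_nonneg _
      rcases le_or_gt 0 d with h | h
      · rw [hd]; exact mul_nonneg (ha0 i).le h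
      · exfalso
        have hd1 : d ≤ -1 := by omega
        nlinarith [ha0 i, hc1 i]
    have h3 : 0 ≤ x - ∑ i, c i * Q i := by
      rw [hx, ← Finset.sum_sub_distrib]
      exact Finset.sum_nonneg fun i _ => by nlinarith [hge i, hQpos i]
    have h4 : 0 ≤ (Δ x - 1) * P := by linarith [hmain]
    nlinarith [hPpos]
end

section
/- If x_1, …, x_n are nonnegative integers and x = Σ_{i=1}^n x_i·(P/a_i), then Δ(x) = 1 + Σ_{i=1}^n ⌊x_i/a_i⌋. -/
/-- If x = Σ x_i·(P/a_i) with x_i nonnegative integers, then Δ(x) = 1 + Σ ⌊x_i/a_i⌋. -/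
theorem stmt_4 (n : ℕ) (hn : 3 ≤ n) (a : Fin n → ℤ)
    (ha : ∀ i, 2 ≤ a i)
    (hcop : ∀ i j, i ≠ j → IsCoprime (a i) (a j))
    (P : ℤ) (hP : P = ∏ i, a i)
    (e0 : ℤ) (b : Fin n → ℤ)
    (hb : ∀ i, 1 ≤ b i ∧ b i < a i)
    (heq : e0 * P + ∑ i, b i * (P / a i) = -1)
    (Δ : ℤ → ℤ)
    (hΔ : ∀ x : ℤ, Δ x = 1 + |e0| * x - ∑ i, ⌈(x * b i : ℚ) / (a i : ℚ)⌉) :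
    ∀ c : Fin n → ℕ, Δ (∑ i, (c i : ℤ) * (P / a i)) = 1 + ∑ i, ⌊((c i : ℚ)) / ((a i : ℚ))⌋ := by
  intro c
  have hane : ∀ i, a i ≠ 0 := fun i => by have := ha i; omega
  have hapos : ∀ i, 0 < a i := fun i => by have := ha i; omega
  -- P / a j is the product over erase j
  have hPj : ∀ j, P / a j = ∏ k ∈ Finset.univ.erase j, a k := by
    intro j
    have : P = a j * ∏ k ∈ Finset.univ.erase j, a k := by
      rw [hP, Finset.mul_prod_erase _ _ (Finset.mem_univ j)]
    rw [this, Int.mul_ediv_cancel_left _ (hane j)]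
  have hPapos : ∀ j, 0 < P / a j := by
    intro j
    rw [hPj]
    exact Finset.prod_pos fun k _ => hapos k
  have hPpos : 0 < P := hP ▸ Finset.prod_pos fun k _ => hapos k
  have hdvdPj : ∀ i j, i ≠ j → a i ∣ P / a j := by
    intro i j hij
    rw [hPj]
    exact Finset.dvd_prod_of_mem a (by simp [Finset.mem_erase, hij])
  have haP : ∀ i, a i ∣ P := fun i => hP ▸ Finset.dvd_prod_of_mem a (Finset.mem_univ i)
  set x : ℤ := ∑ i, (c i : ℤ) * (P / a i) with hx
  -- a i ∣ b i * (P / a i) + 1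
  have hb1 : ∀ i, a i ∣ b i * (P / a i) + 1 := by
    intro i
    have hsplit : ∑ j, b j * (P / a j)
        = b i * (P / a i) + ∑ j ∈ Finset.univ.erase i, b j * (P / a j) := by
      exact (Finset.add_sum_erase _ _ (Finset.mem_univ i)).symm
    have : b i * (P / a i) + 1
        = -(e0 * P) - ∑ j ∈ Finset.univ.erase i, b j * (P / a j) := by
      have := heq
      rw [hsplit] at this
      linarith
    rw [this]
    refine dvd_sub (dvd_neg.mpr (Dvd.dvd.mul_left (haP i) e0)) ?_
    exact Finset.dvd_sum fun j hj =>
      Dvd.dvd.mul_left (hdvdPj i j (Finset.ne_of_mem_erase hj).symm) _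
  -- a i ∣ x * b i + c i
  have key : ∀ i, a i ∣ x * b i + c i := by
    intro i
    have hsplit : x = (c i : ℤ) * (P / a i)
        + ∑ j ∈ Finset.univ.erase i, (c j : ℤ) * (P / a j) := by
      rw [hx]; exact (Finset.add_sum_erase _ _ (Finset.mem_univ i)).symm
    have hrw : x * b i + c i
        = (c i : ℤ) * (b i * (P / a i) + 1)
          + (∑ j ∈ Finset.univ.erase i, (c j : ℤ) * (P / a j)) * b i := by
      rw [hsplit]; ring
    rw [hrw]
    refine dvd_add (Dvd.dvd.mul_left (hb1 i) _) (Dvd.dvd.mul_right ?_ _)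
    exact Finset.dvd_sum fun j hj =>
      Dvd.dvd.mul_left (hdvdPj i j (Finset.ne_of_mem_erase hj).symm) _
  -- exact quotients
  set t : Fin n → ℤ := fun i => (x * b i + c i) / a i with ht
  have htq : ∀ i, a i * t i = x * b i + c i := fun i => Int.mul_ediv_cancel' (key i)
  -- ceiling computation
  have hceil : ∀ i, ⌈(x * b i : ℚ) / (a i : ℚ)⌉ = t i - ⌊((c i : ℚ)) / ((a i : ℚ))⌋ := by
    intro i
    have haQ : (a i : ℚ) ≠ 0 := Int.cast_ne_zero.mpr (hane i)
    have h2 : (x : ℚ) * (b i : ℚ) = (a i : ℚ) * (t i : ℚ) - (c i : ℚ) := by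
      have h3 : ((a i * t i : ℤ) : ℚ) = ((x * b i + (c i : ℤ) : ℤ) : ℚ) := by
        exact_mod_cast congrArg (fun z : ℤ => (z : ℚ)) (htq i)
      push_cast at h3
      linarith
    have hval : (x : ℚ) * (b i : ℚ) / (a i : ℚ) = -((c i : ℚ) / (a i : ℚ)) + (t i : ℚ) := by
      rw [h2]
      field_simp
      ring
    rw [hval, Int.ceil_add_intCast, Int.ceil_neg]
    ring
  -- e0 < 0
  have he0 : e0 < 0 := by
    have hterm : ∀ i ∈ Finset.univ, (1:ℤ) ≤ b i * (P / a i) := fun i _ =>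
      one_le_mul_of_one_le_of_one_le (hb i).1 (hPapos i)
    have hsum : (n : ℤ) ≤ ∑ i, b i * (P / a i) := by
      calc (n : ℤ) = ∑ _i : Fin n, (1:ℤ) := by simp
        _ ≤ _ := Finset.sum_le_sum hterm
    have : e0 * P < 0 := by
      have : e0 * P = -1 - ∑ i, b i * (P / a i) := by linarith
      omega
    by_contra h
    push_neg at h
    nlinarith
  -- Σ t i = -e0 * x
  have hsumt : ∑ i, t i = -e0 * x := by
    have hPne : P ≠ 0 := ne_of_gt hPpos
    apply mul_left_cancel₀ hPne
    have hPt : ∀ i, P * t i = (x * b i + c i) * (P / a i) := by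
      intro i
      have hPi : a i * (P / a i) = P := Int.mul_ediv_cancel' (haP i)
      calc P * t i = (a i * (P / a i)) * t i := by rw [hPi]
        _ = (a i * t i) * (P / a i) := by ring
        _ = (x * b i + c i) * (P / a i) := by rw [htq i]
    rw [Finset.mul_sum]
    simp_rw [hPt]
    have hexp : ∑ i, (x * b i + c i) * (P / a i)
        = x * (∑ i, b i * (P / a i)) + ∑ i, (c i : ℤ) * (P / a i) := by
      rw [Finset.mul_sum, ← Finset.sum_add_distrib]
      exact Finset.sum_congr rfl fun i _ => by ring
    rw [hexp, ← hx]
    have hsb : ∑ i, b i * (P / a i) = -1 - e0 * P := by linarith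
    rw [hsb]; ring
  rw [hΔ]
  simp_rw [hceil]
  rw [Finset.sum_sub_distrib, hsumt, abs_of_neg he0]
  ring
end

section
/- If s is an integer with s ∈ H and s − α ∉ H, then Δ(s·a_n) = 1. -/
open Finset

private lemma ceil_div_eq (a m q r : ℤ) (ha : 0 < a) (hr0 : 0 ≤ r) (hra : r < a)
    (h : m + r = a * q) : ⌈(m : ℚ) / (a : ℚ)⌉ = q := by
  have ha' : (0:ℚ) < (a:ℚ) := by exact_mod_cast ha
  have hQ : (m:ℚ) + (r:ℚ) = (a:ℚ) * (q:ℚ) := by exact_mod_cast h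
  have hr0' : (0:ℚ) ≤ (r:ℚ) := by exact_mod_cast hr0
  have hra' : (r:ℚ) < (a:ℚ) := by exact_mod_cast hra
  rw [Int.ceil_eq_iff]
  constructor
  · rw [lt_div_iff₀ ha']; nlinarith
  · rw [div_le_iff₀ ha']; nlinarith

/-- If s ∈ H but s − α ∉ H, where H is the numerical semigroup generated by the α/a_i for i ∈ [1,n−1], then Δ(s·a_n) = 1. -/
theorem stmt_5 (n : ℕ) (hn : 3 ≤ n) (a : Fin (n - 1) → ℤ) (an : ℤ)
    (ha : ∀ i, 2 ≤ a i) (han : 2 ≤ an)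
    (hcop : ∀ i j, i ≠ j → IsCoprime (a i) (a j))
    (hcopn : ∀ i, IsCoprime (a i) an)
    (α P : ℤ) (hα : α = ∏ i, a i) (hP : P = α * an)
    (e0 : ℤ) (b : Fin (n - 1) → ℤ) (bn : ℤ)
    (hb : ∀ i, 1 ≤ b i ∧ b i < a i) (hbn : 1 ≤ bn ∧ bn < an)
    (heq : e0 * P + (∑ i, b i * (P / a i)) + bn * α = -1)
    (Δ : ℤ → ℤ)
    (hΔ : ∀ x : ℤ, Δ x = 1 + |e0| * x -
      ((∑ i, ⌈(x * b i : ℚ) / (a i : ℚ)⌉) + ⌈(x * bn : ℚ) / (an : ℚ)⌉)) :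
    ∀ s : ℤ,
      (∃ c : Fin (n - 1) → ℕ, s = ∑ i, (c i : ℤ) * (α / a i)) →
      ¬ (∃ c : Fin (n - 1) → ℕ, s - α = ∑ i, (c i : ℤ) * (α / a i)) →
      Δ (s * an) = 1 := by
  intro s hsH hsnH
  obtain ⟨c, hc⟩ := hsH
  set t : Fin (n-1) → ℤ := fun i => ∏ j ∈ Finset.univ.erase i, a j with ht
  have hane : ∀ i, a i ≠ 0 := fun i => by have := ha i; intro h; omega
  have hαi : ∀ i, α = a i * t i := fun i => by
    rw [hα, ht]; exact (Finset.mul_prod_erase _ _ (mem_univ i)).symm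
  have htpos : ∀ i, 0 < t i := fun i =>
    Finset.prod_pos (fun j _ => by have := ha j; omega)
  have hαdiv : ∀ i, α / a i = t i := fun i => by
    rw [hαi i]; exact Int.mul_ediv_cancel_left _ (hane i)
  have hPdiv : ∀ i, P / a i = t i * an := fun i => by
    have h : P = a i * (t i * an) := by rw [hP, hαi i]; ring
    rw [h, Int.mul_ediv_cancel_left _ (hane i)]
  simp only [hαdiv] at hc
  have hsum : (∑ i, b i * (P / a i)) = (∑ i, b i * t i) * an := by
    rw [Finset.sum_mul]; exact Finset.sum_congr rfl fun i _ => by rw [hPdiv i]; ring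
  rw [hsum] at heq
  have hαpos : 0 < α := by
    rw [hα]; exact Finset.prod_pos (fun j _ => by have := ha j; omega)
  have hBnn : 0 ≤ (∑ i, b i * t i) :=
    Finset.sum_nonneg fun i _ => mul_nonneg (by have := (hb i).1; omega) (le_of_lt (htpos i))
  have he0 : e0 < 0 := by
    nlinarith [mul_nonneg hBnn (show (0:ℤ) ≤ an by omega),
      mul_pos (show (0:ℤ) < bn by have := hbn.1; omega) hαpos,
      mul_pos hαpos (show (0:ℤ) < an by omega)]
  -- all c i < a i
  have hclt : ∀ i, (c i : ℤ) < a i := by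
    intro i
    by_contra hle
    push_neg at hle
    apply hsnH
    refine ⟨fun j => if j = i then c j - (a i).toNat else c j, ?_⟩
    have hAi : ((a i).toNat : ℤ) = a i := Int.toNat_of_nonneg (by have := ha i; omega)
    have hle' : (a i).toNat ≤ c i := Int.toNat_le.mpr (by exact_mod_cast hle)
    simp only [hαdiv]
    have step : ∀ j ∈ Finset.univ, ((if j = i then c j - (a i).toNat else c j : ℕ) : ℤ) * t j
        = (c j : ℤ) * t j - (if j = i then α else 0) := by
      intro j _
      rcases eq_or_ne j i with hj | hj
      · subst hj
        rw [if_pos rfl, if_pos rfl, Nat.cast_sub hle', hAi, hαi j]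
        ring
      · rw [if_neg hj, if_neg hj]
        ring
    rw [Finset.sum_congr rfl step, Finset.sum_sub_distrib, ← hc,
      Finset.sum_ite_eq' Finset.univ i (fun _ => α)]
    simp
  -- divisibility
  have hdvd : ∀ i, a i ∣ s * an * b i + (c i : ℤ) := by
    intro i
    have hR : a i ∣ s - (c i : ℤ) * t i := by
      have h : s - (c i:ℤ) * t i = ∑ j ∈ Finset.univ.erase i, (c j : ℤ) * t j := by
        rw [hc, ← Finset.add_sum_erase _ _ (mem_univ i)]; ring
      rw [h]
      refine Finset.dvd_sum fun j hj => Dvd.dvd.mul_left ?_ _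
      exact Finset.dvd_prod_of_mem a
        (Finset.mem_erase.mpr ⟨Ne.symm (Finset.mem_erase.mp hj).1, mem_univ i⟩)
    have hK : a i ∣ b i * (t i * an) + 1 := by
      have hsplit : b i * (t i * an) + 1 =
          -(e0 * P) - (∑ j ∈ Finset.univ.erase i, b j * (t j * an)) - bn * α := by
        have h0 : (∑ j, b j * (t j * an)) =
            b i * (t i * an) + ∑ j ∈ Finset.univ.erase i, b j * (t j * an) :=
          (Finset.add_sum_erase _ _ (mem_univ i)).symm
        have h1 : e0 * P + (∑ j, b j * (t j * an)) + bn * α = -1 := by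
          rw [show (∑ j, b j * (t j * an)) = (∑ j, b j * t j) * an from by
            rw [Finset.sum_mul]; exact Finset.sum_congr rfl fun j _ => by ring]
          exact heq
        linarith [h0, h1]
      rw [hsplit]
      have hd1 : a i ∣ e0 * P := Dvd.dvd.mul_left ⟨t i * an, by rw [hP, hαi i]; ring⟩ e0
      have hd2 : a i ∣ ∑ j ∈ Finset.univ.erase i, b j * (t j * an) := by
        refine Finset.dvd_sum fun j hj => Dvd.dvd.mul_left ?_ _
        exact Dvd.dvd.mul_right (Finset.dvd_prod_of_mem a
          (Finset.mem_erase.mpr ⟨Ne.symm (Finset.mem_erase.mp hj).1, mem_univ i⟩)) an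
      have hd3 : a i ∣ bn * α := Dvd.dvd.mul_left ⟨t i, hαi i⟩ bn
      exact dvd_sub (dvd_sub (dvd_neg.mpr hd1) hd2) hd3
    obtain ⟨u, hu⟩ := hK
    obtain ⟨v, hv⟩ := hR
    exact ⟨(c i : ℤ) * u + v * an * b i, by linear_combination (c i : ℤ) * hu + an * b i * hv⟩
  set q : Fin (n-1) → ℤ := fun i => (s * an * b i + (c i : ℤ)) / a i with hqdef
  have hq : ∀ i, s * an * b i + (c i : ℤ) = a i * q i := fun i =>
    (Int.mul_ediv_cancel' (hdvd i)).symm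
  have h2 : ∀ i ∈ Finset.univ, ⌈((s * an : ℤ) * (b i) : ℚ) / ((a i) : ℚ)⌉ = q i := by
    intro i _
    rw [show ((s * an : ℤ) * (b i) : ℚ) = ((s * an * b i : ℤ) : ℚ) by push_cast; ring]
    exact ceil_div_eq (a i) (s * an * b i) (q i) (c i)
      (by have := ha i; omega) (by positivity) (hclt i) (hq i)
  have hbnceil : ⌈((s * an : ℤ) * bn : ℚ) / (an : ℚ)⌉ = s * bn := by
    rw [show ((s * an : ℤ) * bn : ℚ) = ((s * an * bn : ℤ) : ℚ) by push_cast; ring]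
    exact ceil_div_eq an (s * an * bn) (s * bn) 0 (by omega) le_rfl (by omega) (by ring)
  have key : (∑ i, q i) = -e0 * (s * an) - s * bn := by
    have hPne : α * an ≠ 0 := ne_of_gt (mul_pos hαpos (by omega))
    apply mul_left_cancel₀ hPne
    have h1 : α * (∑ i, q i) = s * an * (∑ i, b i * t i) + s := by
      rw [Finset.mul_sum,
        Finset.sum_congr rfl (fun i _ =>
          (by linear_combination (-(t i)) * hq i + q i * hαi i :
            α * q i = s * an * (b i * t i) + (c i : ℤ) * t i)),
        Finset.sum_add_distrib, ← Finset.mul_sum, ← hc]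
    linear_combination an * h1 + (s * an) * heq + (-(s * an) * e0) * hP
  rw [hΔ]
  rw [Finset.sum_congr rfl h2, hbnceil, abs_of_neg he0]
  linarith [key]
end

section
/- For every integer x, one has Δ(x + α) = Δ(x) + 1 if a_n divides x + α, and Δ(x + α) = Δ(x) otherwise. -/
private lemma ceil_add_mul_aux (m k aa : ℤ) (ha : (0:ℤ) < aa) :
    ⌈((m + aa * k : ℤ):ℚ)/(aa:ℚ)⌉ = ⌈((m:ℤ):ℚ)/aa⌉ + k := by
  have h : (aa:ℚ) ≠ 0 := by exact_mod_cast ha.ne'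
  push_cast
  rw [add_div, mul_comm (aa:ℚ), mul_div_assoc, div_self h, mul_one, Int.ceil_add_intCast]

private lemma ceil_one_aux (r aa : ℤ) (h0 : 0 < r) (h1 : r ≤ aa) :
    ⌈((r:ℤ):ℚ)/aa⌉ = 1 := by
  have haa : (0:ℚ) < aa := by exact_mod_cast h0.trans_le h1
  have hr : (0:ℚ) < r := by exact_mod_cast h0
  rw [Int.ceil_eq_iff]
  constructor
  · simpa using div_pos hr haa
  · push_cast; rw [div_le_one haa]; exact_mod_cast h1

/-- ⌈(m-1)/a⌉ in terms of ⌈m/a⌉. -/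
private lemma ceil_pred_aux (m aa : ℤ) (ha : (0:ℤ) < aa) :
    ⌈((m - 1 : ℤ):ℚ)/aa⌉ =
      ⌈((m:ℤ):ℚ)/aa⌉ - (if aa ∣ m - 1 then 1 else 0) := by
  have haa : (aa:ℚ) ≠ 0 := by exact_mod_cast ha.ne'
  set r := (m - 1) % aa with hr
  set k := (m - 1) / aa with hk
  have hrk : m - 1 = r + aa * k := by
    have := Int.mul_ediv_add_emod (m - 1) aa
    rw [hr, hk]; omega
  have hr0 : 0 ≤ r := Int.emod_nonneg _ ha.ne'
  have hrlt : r < aa := Int.emod_lt_of_pos _ ha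
  have h1 : ⌈((m - 1 : ℤ):ℚ)/aa⌉ = ⌈((r:ℤ):ℚ)/aa⌉ + k := by
    rw [hrk] at *; exact ceil_add_mul_aux r k aa ha
  have hm : m = (r + 1) + aa * k := by omega
  have h2 : ⌈((m:ℤ):ℚ)/aa⌉ = ⌈((r + 1 : ℤ):ℚ)/aa⌉ + k := by
    rw [hm]; exact ceil_add_mul_aux (r + 1) k aa ha
  have hdvd : aa ∣ m - 1 ↔ r = 0 := by
    exact Int.dvd_iff_emod_eq_zero
  rcases eq_or_lt_of_le hr0 with h0 | h0
  · have e0 : ⌈((r:ℤ):ℚ)/aa⌉ = 0 := by rw [← h0]; simp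
    have e1 : ⌈((r + 1 : ℤ):ℚ)/aa⌉ = 1 := by
      have : r + 1 = 1 := by omega
      rw [this]; exact ceil_one_aux 1 aa one_pos (by omega)
    rw [h1, h2, if_pos (hdvd.mpr h0.symm), e0, e1]
    ring
  · rw [h1, h2, if_neg (fun hd => absurd (hdvd.mp hd) (by omega))]
    rw [ceil_one_aux r aa h0 (by omega), ceil_one_aux (r+1) aa (by omega) (by omega)]
    ring

/-- For every integer x, Δ(x + α) = Δ(x) + 1 if a_n ∣ x + α, and Δ(x + α) = Δ(x) otherwise. -/
theorem stmt_6 (n : ℕ) (hn : 3 ≤ n) (a : Fin (n - 1) → ℤ) (an : ℤ)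
    (ha : ∀ i, 2 ≤ a i) (han : 2 ≤ an)
    (hcop : ∀ i j, i ≠ j → IsCoprime (a i) (a j))
    (hcopn : ∀ i, IsCoprime (a i) an)
    (α P : ℤ) (hα : α = ∏ i, a i) (hP : P = α * an)
    (e0 : ℤ) (b : Fin (n - 1) → ℤ) (bn : ℤ)
    (hb : ∀ i, 1 ≤ b i ∧ b i < a i) (hbn : 1 ≤ bn ∧ bn < an)
    (heq : e0 * P + (∑ i, b i * (P / a i)) + bn * α = -1)
    (Δ : ℤ → ℤ)
    (hΔ : ∀ x : ℤ, Δ x = 1 + |e0| * x -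
      ((∑ i, ⌈(x * b i : ℚ) / (a i : ℚ)⌉) + ⌈(x * bn : ℚ) / (an : ℚ)⌉)) :
    ∀ x : ℤ,
      (an ∣ x + α → Δ (x + α) = Δ x + 1) ∧
      (¬ an ∣ x + α → Δ (x + α) = Δ x) := by
  have hapos : ∀ i, (0:ℤ) < a i := fun i => lt_of_lt_of_le two_pos (ha i)
  have hanpos : (0:ℤ) < an := lt_of_lt_of_le two_pos han
  have hαpos : 0 < α := hα ▸ Finset.prod_pos (fun i _ => hapos i)
  -- c i = α / a i
  have hdvd : ∀ i : Fin (n-1), ∃ c, α = a i * c := by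
    intro i
    exact (hα ▸ Finset.dvd_prod_of_mem a (Finset.mem_univ i))
  choose c hc using hdvd
  have hcpos : ∀ i, 0 < c i := by
    intro i
    by_contra h
    push_neg at h
    nlinarith [hapos i, hc i]
  -- P / a i = c i * an
  have hPdiv : ∀ i, P / a i = c i * an := by
    intro i
    rw [hP, hc i, mul_assoc, Int.mul_ediv_cancel_left _ (hapos i).ne']
  -- rewrite heq
  have heq' : e0 * (α * an) + (∑ i, b i * c i) * an + bn * α = -1 := by
    rw [← hP]
    rw [Finset.sum_mul]
    calc e0 * P + ∑ i, b i * c i * an + bn * α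
        = e0 * P + ∑ i, b i * (P / a i) + bn * α := by
          congr 1; congr 1
          exact Finset.sum_congr rfl (fun i _ => by rw [hPdiv i]; ring)
      _ = -1 := heq
  set S := ∑ i, b i * c i with hS
  have hSpos : 0 < S := by
    rw [hS]
    apply Finset.sum_pos
    · intro i _
      exact mul_pos (by linarith [(hb i).1]) (hcpos i)
    · exact Finset.univ_nonempty_iff.mpr ⟨⟨0, by omega⟩⟩
  -- e0 < 0
  have he0 : e0 < 0 := by
    by_contra h
    push_neg at h
    nlinarith [hbn.1, mul_pos hαpos hanpos]
  have habs : |e0| = -e0 := abs_of_neg he0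
  -- q and the key relation bn * α = an * q - 1
  set q : ℤ := -e0 * α - S with hq
  have hbnα : bn * α = an * q - 1 := by rw [hq]; linarith [heq']
  -- coprimality of an and bn
  have hcopbn : IsCoprime an bn := ⟨q, -α, by linarith [hbnα]⟩
  intro x
  -- key ceiling computations
  have hceil_i : ∀ i : Fin (n-1),
      ⌈(((x + α) * b i : ℤ):ℚ)/(a i:ℚ)⌉ = ⌈((x * b i : ℤ):ℚ)/(a i:ℚ)⌉ + c i * b i := by
    intro i
    have : (x + α) * b i = x * b i + a i * (c i * b i) := by rw [hc i]; ring
    rw [this]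
    exact ceil_add_mul_aux _ _ _ (hapos i)
  have hxn : (x + α) * bn = (x * bn - 1) + an * q := by
    have : (x + α) * bn = x * bn + bn * α := by ring
    rw [this, hbnα]; ring
  have hceil_n : ⌈(((x + α) * bn : ℤ):ℚ)/(an:ℚ)⌉
      = ⌈((x * bn : ℤ):ℚ)/(an:ℚ)⌉ - (if an ∣ x * bn - 1 then 1 else 0) + q := by
    rw [hxn, ceil_add_mul_aux _ _ _ hanpos, ceil_pred_aux _ _ hanpos]
  -- the divisibility equivalence
  have hdvd_iff : an ∣ x * bn - 1 ↔ an ∣ x + α := by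
    have key : bn * (x + α) = (x * bn - 1) + an * q := by rw [← hxn]; ring
    constructor
    · intro h
      have : an ∣ bn * (x + α) := by rw [key]; exact dvd_add h (Dvd.intro q rfl)
      exact hcopbn.dvd_of_dvd_mul_left this
    · intro h
      have h2 : an ∣ bn * (x + α) := Dvd.dvd.mul_left h bn
      have : x * bn - 1 = bn * (x + α) - an * q := by rw [key]; ring
      rw [this]
      exact dvd_sub h2 (Dvd.intro q rfl)
  -- main difference computation
  have hsum : (∑ i, ⌈(((x + α) * b i : ℤ):ℚ)/(a i:ℚ)⌉)
      = (∑ i, ⌈((x * b i : ℤ):ℚ)/(a i:ℚ)⌉) + ∑ i, c i * b i := by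
    rw [← Finset.sum_add_distrib]
    exact Finset.sum_congr rfl (fun i _ => hceil_i i)
  have hScb : ∑ i, c i * b i = S := by
    rw [hS]; exact Finset.sum_congr rfl (fun i _ => mul_comm _ _)
  have hdiff : Δ (x + α) = Δ x + (if an ∣ x * bn - 1 then 1 else 0) := by
    rw [hΔ (x + α), hΔ x]
    push_cast at hsum hceil_n ⊢
    rw [hsum, hScb, hceil_n, habs, hq]
    ring
  constructor
  · intro h
    rw [hdiff, if_pos (hdvd_iff.mpr h)]
  · intro h
    rw [hdiff, if_neg (fun hd => h (hdvd_iff.mp hd))]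
    ring
end

section
/- The largest positive integer not belonging to G is exactly (n−1)·P − Σ_{i=1}^n P/a_i. That is: the integer F = (n−1)·P − Σ_{i=1}^n P/a_i is positive, F ∉ G, and every integer x > F belongs to G. -/
/-- For `n ≥ 2` and pairwise relatively prime `a_1, …, a_n ≥ 2` with
`P = a_1⋯a_n`, the largest positive integer not in the numerical semigroup `G`
generated by the `P/a_i` is `F = (n−1)·P − Σ_{i=1}^n P/a_i`: that is, `F > 0`,
`F ∉ G`, and every integer `x > F` belongs to `G`. -/
theorem stmt_8 (n : ℕ) (hn : 2 ≤ n) (a : Fin n → ℤ)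
    (ha : ∀ i, 2 ≤ a i)
    (hcop : ∀ i j, i ≠ j → IsCoprime (a i) (a j))
    (P : ℤ) (hP : P = ∏ i, a i)
    (F : ℤ) (hF : F = ((n : ℤ) - 1) * P - ∑ i, P / a i) :
    0 < F ∧
    (¬ ∃ c : Fin n → ℕ, F = ∑ i, (c i : ℤ) * (P / a i)) ∧
    (∀ x : ℤ, F < x → ∃ c : Fin n → ℕ, x = ∑ i, (c i : ℤ) * (P / a i)) := by
  classical
  obtain ⟨b, hb⟩ : ∃ b : Fin n → ℤ, ∀ i, P / a i = b i := ⟨_, fun i => rfl⟩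
  simp only [hb] at hF ⊢
  have hane : ∀ i, a i ≠ 0 := fun i => by have := ha i; omega
  have hprod : ∀ i, P = a i * ∏ j ∈ Finset.univ.erase i, a j := fun i => by
    rw [hP, Finset.mul_prod_erase _ _ (Finset.mem_univ i)]
  have hbe : ∀ i, b i = ∏ j ∈ Finset.univ.erase i, a j := fun i => by
    rw [← hb i, hprod i, Int.mul_ediv_cancel_left _ (hane i)]
  have hab : ∀ i, a i * b i = P := fun i => by rw [hbe i, ← hprod i]
  have hPpos : 0 < P := by
    rw [hP]; exact Finset.prod_pos (fun i _ => by have := ha i; omega)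
  have hbpos : ∀ i, 0 < b i := fun i => by
    rw [hbe i]; exact Finset.prod_pos (fun j _ => by have := ha j; omega)
  have hdvd : ∀ i j, i ≠ j → a i ∣ b j := fun i j hij => by
    rw [hbe j]; exact Finset.dvd_prod_of_mem _ (by simp [hij])
  have hcopb : ∀ i, IsCoprime (a i) (b i) := fun i => by
    rw [hbe i]
    exact IsCoprime.prod_right fun j hj =>
      hcop i j (Ne.symm (Finset.ne_of_mem_erase hj))
  have hn' : (2 : ℤ) ≤ (n : ℤ) := by exact_mod_cast hn
  -- canonical representations
  have canon : ∀ x : ℤ, ∃ c : Fin n → ℤ, (∀ i, 0 ≤ c i) ∧ (∀ i, c i < a i) ∧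
      P ∣ x - ∑ i, c i * b i := by
    intro x
    choose u v huv using hcopb
    refine ⟨fun i => (x * v i) % a i, fun i => Int.emod_nonneg _ (hane i),
      fun i => Int.emod_lt_of_pos _ (by have := ha i; omega), ?_⟩
    rw [hP]
    refine Fintype.prod_dvd_of_coprime (fun i j hij => hcop i j hij) fun i => ?_
    have hsplit : ∑ j, (x * v j) % a j * b j
        = (x * v i) % a i * b i + ∑ j ∈ Finset.univ.erase i, (x * v j) % a j * b j :=
      (Finset.add_sum_erase _ _ (Finset.mem_univ i)).symm
    rw [hsplit]
    have h1 : a i ∣ x - (x * v i) % a i * b i := by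
      have hc : (x * v i) % a i = x * v i - a i * (x * v i / a i) := Int.emod_def _ _
      refine ⟨x * u i + (x * v i / a i) * b i, ?_⟩
      rw [hc]
      linear_combination (-x) * (huv i)
    have h2 : a i ∣ ∑ j ∈ Finset.univ.erase i, (x * v j) % a j * b j :=
      Finset.dvd_sum fun j hj =>
        Dvd.dvd.mul_left (hdvd i j (Ne.symm (Finset.ne_of_mem_erase hj))) _
    have := dvd_sub h1 h2
    simpa [sub_sub] using this
  refine ⟨?_, ?_, ?_⟩
  · -- positivity of F
    have key : ∑ i, 6 * b i ≤ (2 * (n : ℤ) + 1) * P := by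
      by_cases hex : ∃ i0, a i0 = 2
      · obtain ⟨i0, hi0⟩ := hex
        have hbig : ∀ j ∈ Finset.univ.erase i0, 6 * b j ≤ 2 * P := by
          intro j hj
          have hji0 : j ≠ i0 := Finset.ne_of_mem_erase hj
          have haj : a j ≠ 2 := by
            intro h2
            have := hcop i0 j (Ne.symm hji0)
            rw [hi0, h2, Int.isCoprime_iff_gcd_eq_one] at this
            norm_num at this
          have h3 : 3 ≤ a j := by have := ha j; omega
          have := hab j
          nlinarith [hbpos j]
        have hsplit : ∑ i, 6 * b i = 6 * b i0 + ∑ j ∈ Finset.univ.erase i0, 6 * b j :=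
          (Finset.add_sum_erase _ _ (Finset.mem_univ i0)).symm
        have hsum : ∑ j ∈ Finset.univ.erase i0, 6 * b j
            ≤ ∑ j ∈ Finset.univ.erase i0, 2 * P := Finset.sum_le_sum hbig
        have hcard : ∑ j ∈ Finset.univ.erase i0, 2 * P = ((n : ℤ) - 1) * (2 * P) := by
          rw [Finset.sum_const, Finset.card_erase_of_mem (Finset.mem_univ i0)]
          simp only [Finset.card_univ, Fintype.card_fin, nsmul_eq_mul]
          rw [Nat.cast_sub (by omega)]
          norm_num
        have hb0 : 6 * b i0 = 3 * P := by
          have := hab i0; rw [hi0] at this; linarith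
        rw [hsplit, hb0]
        rw [hcard] at hsum
        nlinarith
      · push_neg at hex
        have hbig : ∀ i, 6 * b i ≤ 2 * P := by
          intro i
          have h3 : 3 ≤ a i := by have := ha i; have := hex i; omega
          have := hab i
          nlinarith [hbpos i]
        have hsum : ∑ i, 6 * b i ≤ ∑ _i : Fin n, 2 * P := Finset.sum_le_sum fun i _ => hbig i
        have hcard : ∑ _i : Fin n, 2 * P = (n : ℤ) * (2 * P) := by
          rw [Finset.sum_const]
          simp [Finset.card_univ, mul_comm]
        rw [hcard] at hsum
        nlinarith
    have hms : ∑ i, 6 * b i = 6 * ∑ i, b i := by rw [Finset.mul_sum]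
    rw [hms] at key
    nlinarith
  · -- F not representable
    rintro ⟨c, hc⟩
    have hsum : ∑ j, ((c j : ℤ) + 1) * b j = ((n : ℤ) - 1) * P := by
      have : ∑ j, ((c j : ℤ) + 1) * b j = ∑ j, (c j : ℤ) * b j + ∑ j, b j := by
        rw [← Finset.sum_add_distrib]
        exact Finset.sum_congr rfl fun j _ => by ring
      rw [this, ← hc, hF]; ring
    have hdvdc : ∀ i, a i ∣ (c i : ℤ) + 1 := by
      intro i
      have h1 : a i ∣ ((n : ℤ) - 1) * P := Dvd.dvd.mul_left ⟨b i, (hab i).symm⟩ _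
      have h2 : a i ∣ ∑ j ∈ Finset.univ.erase i, ((c j : ℤ) + 1) * b j :=
        Finset.dvd_sum fun j hj =>
          Dvd.dvd.mul_left (hdvd i j (Ne.symm (Finset.ne_of_mem_erase hj))) _
      have hsplit : ((c i : ℤ) + 1) * b i
          = ((n : ℤ) - 1) * P - ∑ j ∈ Finset.univ.erase i, ((c j : ℤ) + 1) * b j := by
        rw [← hsum, ← Finset.add_sum_erase _ _ (Finset.mem_univ i)]; ring
      have h3 : a i ∣ ((c i : ℤ) + 1) * b i := by rw [hsplit]; exact dvd_sub h1 h2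
      exact (hcopb i).dvd_of_dvd_mul_right h3
    have hge : ∀ i, a i ≤ (c i : ℤ) + 1 := fun i =>
      Int.le_of_dvd (by positivity) (hdvdc i)
    have hbig : ∑ j, a j * b j ≤ ∑ j, ((c j : ℤ) + 1) * b j :=
      Finset.sum_le_sum fun j _ =>
        mul_le_mul_of_nonneg_right (hge j) (le_of_lt (hbpos j))
    have hnp : ∑ j, a j * b j = (n : ℤ) * P := by
      rw [Finset.sum_congr rfl fun j _ => hab j, Finset.sum_const]
      simp [Finset.card_univ]
    rw [hnp, hsum] at hbig
    nlinarith
  · -- every x > F is representable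
    intro x hx
    obtain ⟨c, hc0, hca, hdv⟩ := canon x
    obtain ⟨k, hk⟩ := hdv
    have hup : ∑ i, c i * b i ≤ (n : ℤ) * P - ∑ i, b i := by
      have h1 : ∑ i, c i * b i ≤ ∑ i, (a i - 1) * b i :=
        Finset.sum_le_sum fun i _ =>
          mul_le_mul_of_nonneg_right (by have := hca i; omega) (le_of_lt (hbpos i))
      have h2 : ∑ i, (a i - 1) * b i = (n : ℤ) * P - ∑ i, b i := by
        have : ∑ i, (a i - 1) * b i = ∑ i, a i * b i - ∑ i, b i := by
          rw [← Finset.sum_sub_distrib]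
          exact Finset.sum_congr rfl fun i _ => by ring
        rw [this, Finset.sum_congr rfl fun j _ => hab j, Finset.sum_const]
        simp [Finset.card_univ]
      linarith
    have hk0 : 0 ≤ k := by
      by_contra hneg
      push_neg at hneg
      have hk1 : k ≤ -1 := by omega
      have : P * k ≤ P * (-1) := by
        exact mul_le_mul_of_nonneg_left hk1 (le_of_lt hPpos)
      rw [hF] at hx
      linarith
    set i0 : Fin n := ⟨0, by omega⟩ with hi0
    set d : Fin n → ℤ := fun i => c i + if i = i0 then k * a i0 else 0 with hd
    have hd0 : ∀ i, 0 ≤ d i := by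
      intro i
      by_cases h : i = i0
      · subst h
        simp only [hd, if_pos rfl, if_true, eq_self_iff_true]
        have h1 : (0:ℤ) ≤ k * a i0 := mul_nonneg hk0 (by linarith [ha i0])
        linarith [hc0 i0]
      · simp only [hd, if_neg h, add_zero]
        exact hc0 i
    refine ⟨fun i => (d i).toNat, ?_⟩
    have hcast : ∀ i, ((d i).toNat : ℤ) = d i := fun i => Int.toNat_of_nonneg (hd0 i)
    have hsum : ∑ i, d i * b i = (∑ i, c i * b i) + k * P := by
      have hterm : ∀ i, d i * b i = c i * b i + (if i = i0 then k * a i0 * b i else 0) := by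
        intro i
        simp only [hd]
        by_cases h : i = i0 <;> simp [h] <;> ring
      rw [Finset.sum_congr rfl fun i _ => hterm i, Finset.sum_add_distrib,
        Finset.sum_ite_eq' Finset.univ i0]
      simp only [Finset.mem_univ, if_true]
      rw [mul_assoc, hab i0]
    calc x = ∑ i, c i * b i + k * P := by linarith [hk]
    _ = ∑ i, d i * b i := hsum.symm
    _ = ∑ i, ((d i).toNat : ℤ) * b i := by
        exact Finset.sum_congr rfl fun i _ => by rw [hcast i]
end

section
/- For every integer s, one has s ∈ H if and only if (2t − 1) − s ∉ H, where 2t − 1 = (n−2)·α − Σ_{i=1}^{n−1} α/a_i. (In particular, exactly one of any pair {s, (2t−1)−s} lies in H.) -/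
/-- For every integer s, s ∈ H iff (2t − 1) − s ∉ H, where H is the numerical semigroup generated by the α/a_i and 2t − 1 = (n−2)·α − Σ α/a_i. -/
theorem stmt_10 (n : ℕ) (hn : 3 ≤ n) (a : Fin (n - 1) → ℤ)
    (ha : ∀ i, 2 ≤ a i)
    (hcop : ∀ i j, i ≠ j → IsCoprime (a i) (a j))
    (α : ℤ) (hα : α = ∏ i, a i)
    (t : ℤ) (ht : 2 * t = ((n : ℤ) - 2) * α - (∑ i, α / a i) + 1) :
    ∀ s : ℤ,
      ((∃ c : Fin (n - 1) → ℕ, s = ∑ i, (c i : ℤ) * (α / a i)) ↔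
        ¬ (∃ c : Fin (n - 1) → ℕ, 2 * t - 1 - s = ∑ i, (c i : ℤ) * (α / a i))) := by
  have hapos : ∀ i, 0 < a i := fun i => lt_of_lt_of_le two_pos (ha i)
  have hane : ∀ i, a i ≠ 0 := fun i => (hapos i).ne'
  have hαpos : 0 < α := hα ▸ Finset.prod_pos fun i _ => hapos i
  have hgp : ∀ i : Fin (n - 1), α / a i = ∏ j ∈ Finset.univ.erase i, a j := by
    intro i
    have h1 : α = a i * ∏ j ∈ Finset.univ.erase i, a j := by
      rw [hα, Finset.mul_prod_erase Finset.univ a (Finset.mem_univ i)]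
    rw [h1, Int.mul_ediv_cancel_left _ (hane i)]
  have hdvd : ∀ i, a i ∣ α := fun i => hα ▸ Finset.dvd_prod_of_mem a (Finset.mem_univ i)
  have hga : ∀ i, α / a i * a i = α := fun i => Int.ediv_mul_cancel (hdvd i)
  have hcopg : ∀ i, IsCoprime (α / a i) (a i) := by
    intro i
    rw [hgp i]
    exact IsCoprime.prod_left fun j hj => hcop j i (Finset.ne_of_mem_erase hj)
  have hdvdg : ∀ i j : Fin (n - 1), i ≠ j → a i ∣ α / a j := by
    intro i j hij
    rw [hgp j]
    exact Finset.dvd_prod_of_mem a (Finset.mem_erase.mpr ⟨hij, Finset.mem_univ i⟩)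
  -- Key lemma: with canonical coefficients, membership is equivalent to 0 ≤ m.
  have key : ∀ (x : Fin (n - 1) → ℤ) (m : ℤ), (∀ i, 0 ≤ x i ∧ x i < a i) →
      ((∃ c : Fin (n - 1) → ℕ,
          ∑ i, x i * (α / a i) + m * α = ∑ i, (c i : ℤ) * (α / a i)) ↔ 0 ≤ m) := by
    intro x m hx
    constructor
    · rintro ⟨c, hc⟩
      have hsum : m * α = ∑ j, ((c j : ℤ) - x j) * (α / a j) := by
        simp only [sub_mul, Finset.sum_sub_distrib]
        linarith [hc]
      have hdvdi : ∀ i, a i ∣ ((c i : ℤ) - x i) := by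
        intro i
        have h2 : ((c i : ℤ) - x i) * (α / a i)
            = m * α - ∑ j ∈ Finset.univ.erase i, ((c j : ℤ) - x j) * (α / a j) := by
          rw [hsum, ← Finset.add_sum_erase Finset.univ _ (Finset.mem_univ i)]
          ring
        have h3 : a i ∣ ((c i : ℤ) - x i) * (α / a i) := by
          rw [h2]
          exact dvd_sub ((hdvd i).mul_left m)
            (Finset.dvd_sum fun j hj =>
              ((hdvdg i j (Ne.symm (Finset.ne_of_mem_erase hj)))).mul_left _)
        exact (hcopg i).symm.dvd_of_dvd_mul_right h3
      have hnn : ∀ j, 0 ≤ (c j : ℤ) - x j := by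
        intro j
        rcases hdvdi j with ⟨k, hkj⟩
        rcases le_or_gt 0 k with hk0 | hk0
        · rw [hkj]; exact mul_nonneg (hapos j).le hk0
        · exfalso
          have h1 : a j * k ≤ a j * (-1) :=
            mul_le_mul_of_nonneg_left (by omega) (hapos j).le
          rw [mul_neg_one] at h1
          have h2 : (0 : ℤ) ≤ (c j : ℤ) := Int.natCast_nonneg _
          have h3 := (hx j).2
          linarith [hkj]
      have h4 : 0 ≤ m * α := by
        rw [hsum]
        exact Finset.sum_nonneg fun j _ =>
          mul_nonneg (hnn j) (Int.ediv_nonneg hαpos.le (hapos j).le)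
      by_contra hneg
      push_neg at hneg
      nlinarith
    · intro hm
      have hpos : 0 < n - 1 := by omega
      set i0 : Fin (n - 1) := ⟨0, hpos⟩ with hi0
      refine ⟨fun j => (x j + if j = i0 then m * a i0 else 0).toNat, ?_⟩
      have hcast : ∀ j, (((x j + if j = i0 then m * a i0 else 0).toNat : ℤ))
          = x j + if j = i0 then m * a i0 else 0 := by
        intro j
        apply Int.toNat_of_nonneg
        rcases eq_or_ne j i0 with h | h
        · simp only [h, if_true]
          have := mul_nonneg hm (hapos i0).le
          linarith [(hx i0).1]
        · simp only [h, if_false]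
          linarith [(hx j).1]
      have step : (∑ i, (((x i + if i = i0 then m * a i0 else 0).toNat : ℤ)) * (α / a i))
          = ∑ i, x i * (α / a i) + m * α := by
        have h1 : ∀ i, (((x i + if i = i0 then m * a i0 else 0).toNat : ℤ)) * (α / a i)
            = x i * (α / a i) + (if i = i0 then m * a i0 * (α / a i) else 0) := by
          intro i
          rw [hcast i, add_mul]
          congr 1
          split <;> simp
        rw [Finset.sum_congr rfl (fun i _ => h1 i), Finset.sum_add_distrib,
          Finset.sum_ite_eq' Finset.univ i0 (fun i => m * a i0 * (α / a i))]
        simp only [Finset.mem_univ, if_true]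
        congr 1
        rw [mul_assoc, mul_comm (a i0) (α / a i0), hga i0]
      exact step.symm
  -- Existence of the canonical representation.
  have exist : ∀ s : ℤ, ∃ (x : Fin (n - 1) → ℤ) (m : ℤ),
      (∀ i, 0 ≤ x i ∧ x i < a i) ∧ s = ∑ i, x i * (α / a i) + m * α := by
    intro s
    choose u v huv using fun i => hcopg i
    set x : Fin (n - 1) → ℤ := fun i => (s * u i) % a i with hxdef
    have hx : ∀ i, 0 ≤ x i ∧ x i < a i := fun i =>
      ⟨Int.emod_nonneg _ (hane i), Int.emod_lt_of_pos _ (hapos i)⟩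
    have hdd : ∀ i, a i ∣ s - x i * (α / a i) := by
      intro i
      have h1 : a i ∣ s * u i - x i := Int.dvd_self_sub_of_emod_eq rfl
      have h2 : s - x i * (α / a i)
          = (s * u i - x i) * (α / a i) + s * (v i * a i) := by
        linear_combination (-s) * (huv i)
      rw [h2]
      exact dvd_add (h1.mul_right _) ((dvd_mul_left (a i) (v i)).mul_left s)
    have hdall : ∀ i, a i ∣ s - ∑ j, x j * (α / a j) := by
      intro i
      have h1 : s - ∑ j, x j * (α / a j)
          = (s - x i * (α / a i)) - ∑ j ∈ Finset.univ.erase i, x j * (α / a j) := by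
        rw [← Finset.add_sum_erase Finset.univ _ (Finset.mem_univ i)]
        ring
      rw [h1]
      exact dvd_sub (hdd i)
        (Finset.dvd_sum fun j hj =>
          ((hdvdg i j (Ne.symm (Finset.ne_of_mem_erase hj)))).mul_left _)
    have hαdvd : α ∣ s - ∑ j, x j * (α / a j) := by
      have h5 : (∏ i, a i) ∣ s - ∑ j, x j * (α / a j) :=
        Finset.prod_dvd_of_coprime
          (fun i _ j _ hij => hcop i j hij) (fun i _ => hdall i)
      rwa [← hα] at h5
    refine ⟨x, (s - ∑ j, x j * (α / a j)) / α, hx, ?_⟩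
    have := Int.ediv_mul_cancel hαdvd
    linarith
  -- The Frobenius-type identity for 2t − 1.
  have hF : 2 * t - 1 = ∑ i, (a i - 1) * (α / a i) - α := by
    have h1 : ∑ i, (a i - 1) * (α / a i) = ∑ i : Fin (n - 1), (α - α / a i) := by
      apply Finset.sum_congr rfl
      intro i _
      rw [sub_mul, one_mul, mul_comm, hga i]
    rw [h1, Finset.sum_sub_distrib, Finset.sum_const, Finset.card_univ, Fintype.card_fin,
      nsmul_eq_mul]
    have hcast : ((n - 1 : ℕ) : ℤ) = (n : ℤ) - 1 := by
      have h2 : 1 ≤ n := by omega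
      push_cast [h2]
      ring
    rw [hcast]
    linear_combination ht
  intro s
  obtain ⟨x, m, hx, hs⟩ := exist s
  have h1 : (∃ c : Fin (n - 1) → ℕ, s = ∑ i, (c i : ℤ) * (α / a i)) ↔ 0 ≤ m := by
    rw [hs]
    exact key x m hx
  have hy : ∀ i, 0 ≤ a i - 1 - x i ∧ a i - 1 - x i < a i := by
    intro i
    constructor
    · linarith [(hx i).2]
    · linarith [(hx i).1]
  have hs2 : 2 * t - 1 - s = ∑ i, (a i - 1 - x i) * (α / a i) + (-1 - m) * α := by
    have h3 : ∑ i, (a i - 1 - x i) * (α / a i)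
        = ∑ i, (a i - 1) * (α / a i) - ∑ i, x i * (α / a i) := by
      rw [← Finset.sum_sub_distrib]
      exact Finset.sum_congr rfl fun i _ => by ring
    rw [hF, hs, h3]
    ring
  have h2 : (∃ c : Fin (n - 1) → ℕ, 2 * t - 1 - s = ∑ i, (c i : ℤ) * (α / a i))
      ↔ 0 ≤ -1 - m := by
    rw [hs2]
    exact key _ _ hy
  rw [h1, h2]
  omega
end

section
/- The number of nonnegative integers not belonging to H is exactly t = ((n−2)·α − Σ_{i=1}^{n−1} α/a_i + 1)/2. -/
open Finset
section Aux
variable {m : ℕ} (A : Fin m → ℕ)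

def Gg (i : Fin m) : ℕ := ∏ j ∈ Finset.univ.erase i, A j
def Kk (c : ∀ i, Fin (A i)) : ℕ := ∑ i, (c i : ℕ) * Gg A i

theorem ggA (i : Fin m) : A i * Gg A i = ∏ j, A j := Finset.mul_prod_erase univ A (mem_univ i)

theorem ggdvd {i j : Fin m} (h : i ≠ j) : A i ∣ Gg A j :=
  Finset.dvd_prod_of_mem A (by simp [Finset.mem_erase, h])

theorem ggcop (hcop : ∀ i j, i ≠ j → Nat.Coprime (A i) (A j)) (i : Fin m) :
    Nat.Coprime (A i) (Gg A i) :=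
  Nat.Coprime.prod_right fun j hj => hcop i j (by simp [Finset.mem_erase] at hj; exact (Ne.symm hj))

theorem kk_inj (hcop : ∀ i j, i ≠ j → Nat.Coprime (A i) (A j))
    (c c' : ∀ i, Fin (A i)) (h : Kk A c ≡ Kk A c' [MOD ∏ j, A j]) : c = c' := by
  funext i
  have hd : A i ∣ ∏ j, A j := Finset.dvd_prod_of_mem A (mem_univ i)
  have h2 : Kk A c ≡ Kk A c' [MOD A i] := h.of_dvd hd
  have key : ∀ d : ∀ i, Fin (A i), Kk A d ≡ (d i : ℕ) * Gg A i [MOD A i] := by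
    intro d
    have : Kk A d = (d i : ℕ) * Gg A i + ∑ j ∈ univ.erase i, (d j : ℕ) * Gg A j := by
      rw [Kk, ← Finset.add_sum_erase _ _ (mem_univ i)]
    rw [this]
    have : ∑ j ∈ univ.erase i, (d j : ℕ) * Gg A j ≡ 0 [MOD A i] := by
      apply (Nat.modEq_zero_iff_dvd).2
      apply Finset.dvd_sum
      intro j hj
      exact Dvd.dvd.mul_left (ggdvd A (by simp [Finset.mem_erase] at hj; exact Ne.symm hj)) _
    calc (d i : ℕ) * Gg A i + ∑ j ∈ univ.erase i, (d j : ℕ) * Gg A j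
        ≡ (d i : ℕ) * Gg A i + 0 [MOD A i] := (Nat.ModEq.refl _).add this
      _ = (d i : ℕ) * Gg A i := by ring
  have h3 : (c i : ℕ) * Gg A i ≡ (c' i : ℕ) * Gg A i [MOD A i] :=
    ((key c).symm.trans h2).trans (key c')
  have h4 : (c i : ℕ) ≡ (c' i : ℕ) [MOD A i] :=
    Nat.ModEq.cancel_right_of_coprime (ggcop A hcop i) h3
  have := h4.eq_of_lt_of_lt (c i).2 (c' i).2
  exact Fin.ext this

theorem npos (hA : ∀ i, 2 ≤ A i) : 0 < ∏ j, A j :=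
  Finset.prod_pos fun i _ => by have := hA i; omega

theorem kk_bij (hA : ∀ i, 2 ≤ A i) (hcop : ∀ i j, i ≠ j → Nat.Coprime (A i) (A j)) :
    Function.Bijective (fun c : ∀ i, Fin (A i) => ((Kk A c : ℕ) : ZMod (∏ j, A j))) := by
  have hN : 0 < ∏ j, A j := npos A hA
  haveI : NeZero (∏ j, A j) := ⟨hN.ne'⟩
  rw [Fintype.bijective_iff_injective_and_card]
  constructor
  · intro c c' h
    exact kk_inj A hcop c c' ((ZMod.natCast_eq_natCast_iff _ _ _).1 h)
  · simp [ZMod.card]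

theorem kk_exists (hA : ∀ i, 2 ≤ A i) (hcop : ∀ i j, i ≠ j → Nat.Coprime (A i) (A j))
    (s : ℕ) : ∃ c : ∀ i, Fin (A i), s ≡ Kk A c [MOD ∏ j, A j] := by
  have hN : 0 < ∏ j, A j := npos A hA
  haveI : NeZero (∏ j, A j) := ⟨hN.ne'⟩
  obtain ⟨c, hc⟩ := (kk_bij A hA hcop).2 ((s : ℕ) : ZMod (∏ j, A j))
  exact ⟨c, ((ZMod.natCast_eq_natCast_iff _ _ _).1 hc.symm)⟩

/-- Membership criterion -/
theorem mem_iff (hA : ∀ i, 2 ≤ A i) (hm : 0 < m) (s : ℕ) :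
    (∃ d : Fin m → ℕ, s = ∑ i, d i * Gg A i) ↔
    ∃ c : ∀ i, Fin (A i), Kk A c ≤ s ∧ s ≡ Kk A c [MOD ∏ j, A j] := by
  constructor
  · rintro ⟨d, rfl⟩
    set c : ∀ i, Fin (A i) := fun i => ⟨d i % A i, Nat.mod_lt _ (by have := hA i; omega)⟩ with hc
    have hdec : ∑ i, d i * Gg A i = Kk A c + (∑ i, d i / A i) * (∏ j, A j) := by
      rw [Kk, Finset.sum_mul, ← Finset.sum_add_distrib]
      refine Finset.sum_congr rfl fun i _ => ?_
      have h1 : A i * Gg A i = ∏ j, A j := ggA A i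
      have h2 : d i = d i % A i + A i * (d i / A i) := (Nat.mod_add_div _ _).symm
      calc d i * Gg A i = (d i % A i + A i * (d i / A i)) * Gg A i := by rw [← h2]
        _ = d i % A i * Gg A i + d i / A i * (A i * Gg A i) := by ring
        _ = (c i : ℕ) * Gg A i + d i / A i * (∏ j, A j) := by rw [h1]
    refine ⟨c, ?_, ?_⟩
    · rw [hdec]; exact Nat.le_add_right _ _
    · show _ % _ = _ % _
      rw [hdec, Nat.add_mul_mod_self_right]
  · rintro ⟨c, hle, hmod⟩
    have i0 : Fin m := ⟨0, hm⟩
    have hdvd : (∏ j, A j) ∣ s - Kk A c := (Nat.modEq_iff_dvd' hle).1 hmod.symm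
    obtain ⟨l, hl⟩ := hdvd
    refine ⟨fun i => (c i : ℕ) + (if i = i0 then l * A i0 else 0), ?_⟩
    have key : ∑ i, ((c i : ℕ) + (if i = i0 then l * A i0 else 0)) * Gg A i
        = Kk A c + (∏ j, A j) * l := by
      rw [Finset.sum_congr rfl (fun i _ => add_mul _ _ _), Finset.sum_add_distrib, Kk]
      congr 1
      rw [Finset.sum_eq_single i0]
      · rw [if_pos rfl, mul_assoc, ggA]; ring
      · intro b _ hb; simp [hb]
      · simp
    rw [key]
    omega

noncomputable def Ff : Finset ℕ :=
  Finset.univ.biUnion (fun c : ∀ i, Fin (A i) =>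
    (Finset.range (Kk A c / ∏ j, A j)).image (fun k => Kk A c - (k + 1) * ∏ j, A j))

theorem mem_ff_modeq (hA : ∀ i, 2 ≤ A i) {c : ∀ i, Fin (A i)} {k : ℕ}
    (hk : k < Kk A c / ∏ j, A j) :
    (k + 1) * (∏ j, A j) ≤ Kk A c ∧
      (Kk A c - (k + 1) * ∏ j, A j) ≡ Kk A c [MOD ∏ j, A j] := by
  have hN : 0 < ∏ j, A j := npos A hA
  set P := (k + 1) * ∏ j, A j with hP
  have hle : P ≤ Kk A c := by
    have h1 : k + 1 ≤ Kk A c / ∏ j, A j := hk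
    calc P ≤ (Kk A c / ∏ j, A j) * (∏ j, A j) := Nat.mul_le_mul_right _ h1
      _ ≤ Kk A c := Nat.div_mul_le_self _ _
  refine ⟨hle, ?_⟩
  have hdvd : (∏ j, A j) ∣ Kk A c - (Kk A c - P) := by
    have h2 : Kk A c - (Kk A c - P) = P := by omega
    rw [h2, hP]
    exact Dvd.dvd.mul_left dvd_rfl _
  exact (Nat.modEq_iff_dvd' (by omega)).2 hdvd

theorem ff_card (hA : ∀ i, 2 ≤ A i) (hcop : ∀ i j, i ≠ j → Nat.Coprime (A i) (A j)) :
    (Ff A).card = ∑ c : ∀ i, Fin (A i), Kk A c / ∏ j, A j := by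
  have hN : 0 < ∏ j, A j := npos A hA
  rw [Ff, Finset.card_biUnion]
  · refine Finset.sum_congr rfl fun c _ => ?_
    rw [Finset.card_image_of_injOn, Finset.card_range]
    intro x hx y hy hxy
    simp only [Finset.coe_range, Set.mem_Iio] at hx hy
    have hxy' : Kk A c - (x + 1) * ∏ j, A j = Kk A c - (y + 1) * ∏ j, A j := hxy
    have hx' := (mem_ff_modeq A hA hx).1
    have hy' := (mem_ff_modeq A hA hy).1
    have h5 : (x + 1) * (∏ j, A j) = (y + 1) * (∏ j, A j) := by omega
    have := Nat.eq_of_mul_eq_mul_right hN h5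
    omega
  · intro c _ c' _ hcc
    rw [Function.onFun, Finset.disjoint_left]
    intro s hs hs'
    obtain ⟨k, hk, rfl⟩ := Finset.mem_image.1 hs
    obtain ⟨k', hk', he⟩ := Finset.mem_image.1 hs'
    rw [Finset.mem_range] at hk hk'
    have h1 := (mem_ff_modeq A hA hk).2
    have h2 := (mem_ff_modeq A hA hk').2
    rw [he] at h2
    exact hcc (kk_inj A hcop c c' (h1.symm.trans h2))

theorem gap_eq (hA : ∀ i, 2 ≤ A i) (hcop : ∀ i j, i ≠ j → Nat.Coprime (A i) (A j))
    (hm : 0 < m) :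
    {s : ℕ | ¬ ∃ d : Fin m → ℕ, s = ∑ i, d i * Gg A i} = ↑(Ff A) := by
  have hN : 0 < ∏ j, A j := npos A hA
  ext s
  simp only [Set.mem_setOf_eq, Finset.mem_coe]
  constructor
  · intro hs
    obtain ⟨c, hc⟩ := kk_exists A hA hcop s
    have hlt : s < Kk A c := by
      by_contra h
      exact hs ((mem_iff A hA hm s).2 ⟨c, by omega, hc⟩)
    obtain ⟨l, hl⟩ := (Nat.modEq_iff_dvd' hlt.le).1 hc
    have hl1 : 1 ≤ l := by
      rcases Nat.eq_zero_or_pos l with h | h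
      · rw [h, mul_zero] at hl; omega
      · exact h
    rw [Ff]
    refine Finset.mem_biUnion.2 ⟨c, Finset.mem_univ _, Finset.mem_image.2
      ⟨l - 1, Finset.mem_range.2 ?_, ?_⟩⟩
    · have h2 : l * (∏ j, A j) ≤ Kk A c := by rw [mul_comm]; omega
      have h3 : l ≤ Kk A c / ∏ j, A j := (Nat.le_div_iff_mul_le hN).2 h2
      omega
    · have h4 : (l - 1 + 1) * (∏ j, A j) = (∏ j, A j) * l := by
        rw [Nat.sub_add_cancel hl1, mul_comm]
      rw [h4]
      omega
  · intro hs hmem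
    rw [Ff] at hs
    obtain ⟨c, hcu, hsim⟩ := Finset.mem_biUnion.1 hs
    obtain ⟨k, hk, hes⟩ := Finset.mem_image.1 hsim
    rw [Finset.mem_range] at hk
    obtain ⟨hle, hmod⟩ := mem_ff_modeq A hA hk
    rw [hes] at hmod
    obtain ⟨c', hle', hmod'⟩ := (mem_iff A hA hm _).1 hmem
    have hcc : c = c' := kk_inj A hcop c c' (hmod.symm.trans hmod')
    subst hcc
    have hpos : 0 < (k + 1) * ∏ j, A j := by positivity
    omega

theorem sum_mod (hA : ∀ i, 2 ≤ A i) (hcop : ∀ i j, i ≠ j → Nat.Coprime (A i) (A j)) :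
    ∑ c : ∀ i, Fin (A i), (Kk A c % ∏ j, A j) = ∑ r ∈ Finset.range (∏ j, A j), r := by
  have hN : 0 < ∏ j, A j := npos A hA
  refine Finset.sum_bij (fun c _ => Kk A c % ∏ j, A j) ?_ ?_ ?_ ?_
  · intro c _; exact Finset.mem_range.2 (Nat.mod_lt _ hN)
  · intro c _ c' _ h
    exact kk_inj A hcop c c' h
  · intro r hr
    obtain ⟨c, hc⟩ := kk_exists A hA hcop r
    refine ⟨c, Finset.mem_univ _, ?_⟩
    show Kk A c % _ = r
    rw [← hc]
    exact Nat.mod_eq_of_lt (Finset.mem_range.1 hr)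
  · intro c _; rfl

theorem sum_ci (hA : ∀ i, 2 ≤ A i) (i : Fin m) :
    (∑ c : ∀ j, Fin (A j), ((c i : ℕ))) = Gg A i * ∑ v ∈ Finset.range (A i), v := by
  have hcard : Fintype.card (∀ j : {j // j ≠ i}, Fin (A (j : Fin m))) = Gg A i := by
    rw [Fintype.card_pi]
    simp only [Fintype.card_fin]
    rw [Gg, ← Finset.prod_subtype (Finset.univ.erase i) (fun x => by simp) (fun j => A j)]
  rw [Fintype.sum_equiv (Equiv.piSplitAt i (fun j => Fin (A j)))
    (fun c => ((c i : ℕ))) (fun p => (p.1 : ℕ)) (fun c => rfl)]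
  rw [Fintype.sum_prod_type]
  have h2 : ∀ v : Fin (A i), (∑ _y : (∀ j : {j // j ≠ i}, Fin (A (j : Fin m))), ((v : ℕ)))
      = Gg A i * v := by
    intro v
    rw [Finset.sum_const, Finset.card_univ, hcard, smul_eq_mul]
  rw [Finset.sum_congr rfl fun v _ => h2 v, ← Finset.mul_sum,
    Fin.sum_univ_eq_sum_range (fun v => (v : ℕ)) (A i)]

theorem sum_K (hA : ∀ i, 2 ≤ A i) :
    ∑ c : ∀ j, Fin (A j), Kk A c
      = ∑ i, Gg A i * Gg A i * ∑ v ∈ Finset.range (A i), v := by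
  simp only [Kk]
  rw [Finset.sum_comm]
  refine Finset.sum_congr rfl fun i _ => ?_
  rw [← Finset.sum_mul, sum_ci A hA i]
  ring

theorem aux_genus (hm : 0 < m) (hA : ∀ i, 2 ≤ A i)
    (hcop : ∀ i j, i ≠ j → Nat.Coprime (A i) (A j)) :
    2 * ({s : ℕ | ¬ ∃ d : Fin m → ℕ, s = ∑ i, d i * Gg A i}.ncard : ℤ)
      = ((m : ℤ) - 1) * ((∏ j, A j : ℕ) : ℤ) - (∑ i, (Gg A i : ℤ)) + 1 := by
  have hN : 0 < ∏ j, A j := npos A hA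
  set N : ℕ := ∏ j, A j with hNdef
  set Q : ℕ := ∑ c : ∀ i, Fin (A i), Kk A c / N with hQdef
  set R : ℕ := ∑ c : ∀ i, Fin (A i), Kk A c % N with hRdef
  set T : ℕ := ∑ c : ∀ i, Fin (A i), Kk A c with hTdef
  have hcard : ({s : ℕ | ¬ ∃ d : Fin m → ℕ, s = ∑ i, d i * Gg A i}.ncard : ℤ) = (Q : ℤ) := by
    rw [gap_eq A hA hcop hm, Set.ncard_coe_finset, ff_card A hA hcop]
  rw [hcard]
  -- z1 : T = N * Q + R
  have z1 : T = N * Q + R := by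
    rw [hTdef, hQdef, hRdef, Finset.mul_sum, ← Finset.sum_add_distrib]
    exact Finset.sum_congr rfl fun c _ => (Nat.div_add_mod _ _).symm
  -- z2 : 2 * R = N * N - N  (in ℤ)
  have z2 : 2 * (R : ℤ) = (N : ℤ) * N - N := by
    have g : (∑ r ∈ Finset.range N, r) * 2 = N * (N - 1) := Finset.sum_range_id_mul_two N
    have hR : R = ∑ r ∈ Finset.range N, r := sum_mod A hA hcop
    have : R * 2 = N * (N - 1) := by rw [hR]; exact g
    have h1N : 1 ≤ N := hN
    have hc := congrArg (fun x : ℕ => (x : ℤ)) this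
    simp only [Nat.cast_mul, Nat.cast_sub h1N] at hc
    push_cast at hc
    linarith
  -- z3 : 2 * T = ∑ Gg² * A * (A - 1)  (in ℤ)
  have z3 : 2 * (T : ℤ) = ∑ i, (Gg A i : ℤ) * Gg A i * ((A i : ℤ) * ((A i : ℤ) - 1)) := by
    have hz : 2 * T = ∑ i, Gg A i * Gg A i * (A i * (A i - 1)) := by
      rw [hTdef, sum_K A hA, Finset.mul_sum]
      refine Finset.sum_congr rfl fun i _ => ?_
      have g : (∑ v ∈ Finset.range (A i), v) * 2 = A i * (A i - 1) :=
        Finset.sum_range_id_mul_two (A i)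
      calc 2 * (Gg A i * Gg A i * ∑ v ∈ Finset.range (A i), v)
          = Gg A i * Gg A i * ((∑ v ∈ Finset.range (A i), v) * 2) := by ring
        _ = Gg A i * Gg A i * (A i * (A i - 1)) := by rw [g]
    have := congrArg (fun x : ℕ => (x : ℤ)) hz
    push_cast at this
    rw [this]
    refine Finset.sum_congr rfl fun i _ => ?_
    have h1 : 1 ≤ A i := le_trans one_le_two (hA i)
    push_cast [Nat.cast_sub h1]
    ring
  -- z4 : per-i product identity
  have z4 : ∀ i, (A i : ℤ) * (Gg A i : ℤ) = (N : ℤ) := by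
    intro i
    have := ggA A i
    exact_mod_cast congrArg (fun x : ℕ => (x : ℤ)) this
  -- z5 : rewrite 2T
  have z5 : 2 * (T : ℤ) = (∑ i, ((N : ℤ) - Gg A i)) * N := by
    rw [z3, Finset.sum_mul]
    refine Finset.sum_congr rfl fun i _ => ?_
    linear_combination ((Gg A i : ℤ) * (A i : ℤ) + (N : ℤ) - (Gg A i : ℤ)) * z4 i
  have hsum : (∑ i, ((N : ℤ) - Gg A i)) = (m : ℤ) * N - ∑ i, (Gg A i : ℤ) := by
    rw [Finset.sum_sub_distrib, Finset.sum_const, Finset.card_univ, Fintype.card_fin,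
      nsmul_eq_mul]
  have z1' : (T : ℤ) = (N : ℤ) * Q + R := by exact_mod_cast congrArg (fun x : ℕ => (x : ℤ)) z1
  have main : (N : ℤ) * (2 * Q) = (N : ℤ) * (((m : ℤ) - 1) * N - (∑ i, (Gg A i : ℤ)) + 1) := by
    have e1 : (N : ℤ) * (2 * Q) = 2 * (T : ℤ) - 2 * R := by linarith
    rw [e1, z5, hsum]
    linarith [z2]
  have hNz : (N : ℤ) ≠ 0 := by exact_mod_cast hN.ne'
  exact mul_left_cancel₀ hNz main

end Aux

/-- The number of nonnegative integers not belonging to the numerical semigroup H generated by the α/a_i is exactly t = ((n−2)·α − Σ α/a_i + 1)/2. -/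
theorem stmt_11 (n : ℕ) (hn : 3 ≤ n) (a : Fin (n - 1) → ℤ)
    (ha : ∀ i, 2 ≤ a i)
    (hcop : ∀ i j, i ≠ j → IsCoprime (a i) (a j))
    (α : ℤ) (hα : α = ∏ i, a i)
    (t : ℤ) (ht : 2 * t = ((n : ℤ) - 2) * α - (∑ i, α / a i) + 1) :
    (({s : ℕ | ¬ ∃ c : Fin (n - 1) → ℕ, (s : ℤ) = ∑ i, (c i : ℤ) * (α / a i)}.ncard : ℤ)) = t := by
  obtain ⟨A, haA⟩ : ∃ A : Fin (n - 1) → ℕ, ∀ i, (A i : ℤ) = a i :=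
    ⟨fun i => (a i).natAbs, fun i => Int.natAbs_of_nonneg (by linarith [ha i])⟩
  have hA2 : ∀ i, 2 ≤ A i := fun i => by
    have := ha i; have := haA i; omega
  have hcopN : ∀ i j, i ≠ j → Nat.Coprime (A i) (A j) := fun i j hij => by
    have h1 := (Int.isCoprime_iff_gcd_eq_one).1 (hcop i j hij)
    have h2 : (A i) = (a i).natAbs := by
      have := haA i; omega
    have h3 : (A j) = (a j).natAbs := by
      have := haA j; omega
    rw [Nat.Coprime, h2, h3]
    exact h1
  have hm : 0 < n - 1 := by omega
  have hαN : α = ((∏ j, A j : ℕ) : ℤ) := by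
    rw [hα]
    push_cast [haA]
    rfl
  have hdiv : ∀ i, α / a i = (Gg A i : ℤ) := by
    intro i
    have h1 : α = a i * (Gg A i : ℤ) := by
      rw [hα, ← Finset.mul_prod_erase _ _ (Finset.mem_univ i), Gg]
      push_cast [haA]
      rfl
    rw [h1, Int.mul_ediv_cancel_left _ (by linarith [ha i] : a i ≠ 0)]
  have hset : {s : ℕ | ¬ ∃ c : Fin (n - 1) → ℕ, (s : ℤ) = ∑ i, (c i : ℤ) * (α / a i)}
      = {s : ℕ | ¬ ∃ d : Fin (n - 1) → ℕ, s = ∑ i, d i * Gg A i} := by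
    ext s
    simp only [Set.mem_setOf_eq]
    have hiff : ∀ c : Fin (n - 1) → ℕ,
        ((s : ℤ) = ∑ i, (c i : ℤ) * (α / a i)) ↔ s = ∑ i, c i * Gg A i := by
      intro c
      have h2 : ∀ i : Fin (n - 1), (c i : ℤ) * (α / a i) = ((c i * Gg A i : ℕ) : ℤ) :=
        fun i => by rw [hdiv]; push_cast; ring
      rw [Finset.sum_congr rfl fun i _ => h2 i, ← Nat.cast_sum]
      exact Nat.cast_inj
    exact not_congr (exists_congr hiff)
  rw [hset]
  have key := aux_genus A hm hA2 hcopN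
  have hcast : ((n - 1 : ℕ) : ℤ) = (n : ℤ) - 1 := by rw [Nat.cast_sub (le_trans (by norm_num) hn), Nat.cast_one]
  rw [hcast, ← hαN] at key
  have e : ((n : ℤ) - 1 - 1) = (n : ℤ) - 2 := by ring
  rw [e] at key
  have hsumdiv : (∑ i, α / a i) = ∑ i, (Gg A i : ℤ) :=
    Finset.sum_congr rfl fun i _ => hdiv i
  linarith [key, ht, hsumdiv]
end

section
/- One has χ(0) = −t; that is, Δ(−α) + Δ(−α+1) + ⋯ + Δ(−1) = −t. -/
open Finset

lemma refl_sum (f : ℤ → ℤ) (lo hi s : ℤ) (hs : s = lo + hi - 1) :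
    ∑ k ∈ Ico lo hi, f k = ∑ k ∈ Ico lo hi, f (s - k) := by
  apply Finset.sum_nbij' (fun k => s - k) (fun k => s - k) <;>
    simp_all [Finset.mem_Ico] <;> omega

lemma gauss (N : ℤ) (hN : 0 ≤ N) : 2 * ∑ k ∈ Ico (0:ℤ) N, k = N * (N - 1) := by
  have h := refl_sum id 0 N (N - 1) (by ring)
  simp only [id] at h
  have hcard : ((Ico (0:ℤ) N).card : ℤ) = N := by rw [Int.card_Ico]; omega
  calc 2 * ∑ k ∈ Ico (0:ℤ) N, k = (∑ k ∈ Ico (0:ℤ) N, k) + ∑ k ∈ Ico (0:ℤ) N, k := two_mul _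
    _ = (∑ k ∈ Ico (0:ℤ) N, k) + ∑ k ∈ Ico (0:ℤ) N, (N - 1 - k) := by rw [← h]
    _ = ∑ k ∈ Ico (0:ℤ) N, (N - 1) := by
        rw [← Finset.sum_add_distrib]; exact Finset.sum_congr rfl (fun k _ => by ring)
    _ = N * (N - 1) := by rw [Finset.sum_const, nsmul_eq_mul, hcard]

lemma mod_refl (m x : ℤ) (hm : 0 < m) : (-1 - x) % m = m - 1 - x % m := by
  have h1 : 0 ≤ x % m := Int.emod_nonneg x (by omega)
  have h2 : x % m < m := Int.emod_lt_of_pos x hm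
  have hd : x % m = x - m * (x / m) := Int.emod_def x m
  have key : -1 - x = (m - 1 - x % m) + m * (-(x / m) - 1) := by rw [hd]; ring
  rw [key, Int.add_mul_emod_self_left, Int.emod_eq_of_lt (by omega) (by omega)]

lemma inv_emod_cancel (m b u k : ℤ) (hm : 0 < m) (hu : m ∣ (b * u - 1))
    (hk0 : 0 ≤ k) (hkm : k < m) : (k * b) % m * u % m = k := by
  obtain ⟨c, hc⟩ := hu
  have e1 : (k * b) % m * u % m = (k * b * u) % m := by
    rw [Int.mul_emod ((k * b) % m) u m, Int.emod_emod_of_dvd _ (dvd_refl m),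
      ← Int.mul_emod]
  have e2 : k * b * u = k + m * (k * c) := by
    have : b * u = 1 + m * c := by linarith
    calc k * b * u = k * (b * u) := by ring
      _ = k + m * (k * c) := by rw [this]; ring
  rw [e1, e2, Int.add_mul_emod_self_left, Int.emod_eq_of_lt hk0 hkm]

lemma period_sum (m b u : ℤ) (hm : 0 < m) (hu : m ∣ (b * u - 1)) :
    2 * ∑ k ∈ Ico (0:ℤ) m, (k * b) % m = m * (m - 1) := by
  have hu' : m ∣ (u * b - 1) := by
    obtain ⟨c, hc⟩ := hu; exact ⟨c, by linarith⟩
  have hbij : ∑ k ∈ Ico (0:ℤ) m, (k * b) % m = ∑ r ∈ Ico (0:ℤ) m, r := by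
    apply Finset.sum_nbij' (fun k => (k * b) % m) (fun r => (r * u) % m)
    · intro k hk
      simp only [Finset.mem_Ico] at *
      exact ⟨Int.emod_nonneg _ (by omega), Int.emod_lt_of_pos _ hm⟩
    · intro r hr
      simp only [Finset.mem_Ico] at *
      exact ⟨Int.emod_nonneg _ (by omega), Int.emod_lt_of_pos _ hm⟩
    · intro k hk
      simp only [Finset.mem_Ico] at hk
      exact inv_emod_cancel m b u k hm hu hk.1 hk.2
    · intro r hr
      simp only [Finset.mem_Ico] at hr
      exact inv_emod_cancel m u b r hm hu' hr.1 hr.2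
    · intro k hk; rfl
  rw [hbij]; exact gauss m (le_of_lt hm)

lemma block_shift (m b q : ℤ) :
    ∑ k ∈ Ico (m * q) (m * q + m), (k * b) % m = ∑ k ∈ Ico (0:ℤ) m, (k * b) % m := by
  apply Finset.sum_nbij' (fun k => k - m * q) (fun k => k + m * q)
  · intro k hk; simp only [Finset.mem_Ico] at *; omega
  · intro k hk; simp only [Finset.mem_Ico] at *; omega
  · intro k _; ring
  · intro k _; ring
  · intro k _
    have : k * b = (k - m * q) * b + m * (q * b) := by ring
    rw [this, Int.add_mul_emod_self_left]

lemma blocks (m b : ℤ) (hm : 0 < m) : ∀ q : ℕ,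
    ∑ k ∈ Ico (0:ℤ) (m * q), (k * b) % m = q * ∑ k ∈ Ico (0:ℤ) m, (k * b) % m := by
  intro q
  induction q with
  | zero => simp
  | succ q ih =>
    have h3 : m * ((q+1 : ℕ) : ℤ) = m * q + m := by push_cast; ring
    rw [h3]
    have h1 : (0:ℤ) ≤ m * q := by positivity
    have h2 : m * (q:ℤ) ≤ m * q + m := by omega
    rw [← Finset.Ico_union_Ico_eq_Ico h1 h2,
      Finset.sum_union (Finset.Ico_disjoint_Ico_consecutive _ _ _), ih, block_shift m b q]
    push_cast; ring

lemma Ico01 : Ico (0:ℤ) 1 = {0} := by ext x; simp [Finset.mem_Ico]; omega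

lemma drop_zero (g : ℤ → ℤ) (A : ℤ) (hA : 0 ≤ A) (h0 : g 0 = 0) :
    ∑ k ∈ Ico (1:ℤ) (A + 1), g k = ∑ k ∈ Ico (0:ℤ) (A + 1), g k := by
  rw [← Finset.Ico_union_Ico_eq_Ico (by omega : (0:ℤ) ≤ 1) (by omega : (1:ℤ) ≤ A + 1),
    Finset.sum_union (Finset.Ico_disjoint_Ico_consecutive _ _ _), Ico01,
    Finset.sum_singleton, h0, zero_add]

lemma shift_bounds (g : ℤ → ℤ) (A : ℤ) (hA : 0 ≤ A) (h0 : g 0 = 0) (hA0 : g A = 0) :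
    ∑ k ∈ Ico (1:ℤ) (A + 1), g k = ∑ k ∈ Ico (0:ℤ) A, g k := by
  rw [drop_zero g A hA h0]
  have e2 : ∑ k ∈ Ico (0:ℤ) (A+1), g k = (∑ k ∈ Ico (0:ℤ) A, g k) + g A := by
    rw [← Finset.Ico_union_Ico_eq_Ico hA (by omega : A ≤ A + 1),
      Finset.sum_union (Finset.Ico_disjoint_Ico_consecutive _ _ _)]
    have : Ico A (A+1) = {A} := by ext x; simp [Finset.mem_Ico]; omega
    rw [this, Finset.sum_singleton]
  rw [e2, hA0, add_zero]

lemma L3 (m b u A : ℤ) (hm : 0 < m) (hu : m ∣ (b * u - 1)) (hdvd : m ∣ A) (hA : 0 ≤ A) :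
    2 * ∑ k ∈ Ico (1:ℤ) (A + 1), (k * b) % m = A * (m - 1) := by
  have h0 : (0 * b) % m = 0 := by simp
  obtain ⟨c, hc⟩ := hdvd
  have hA0 : (A * b) % m = 0 := by
    rw [hc, (by ring : m * c * b = m * (c * b)), Int.mul_emod_right]
  rw [shift_bounds _ A hA h0 hA0]
  have hc0 : 0 ≤ c := by nlinarith
  have hA' : A = m * (c.toNat : ℤ) := by rw [Int.toNat_of_nonneg hc0]; exact hc
  rw [hA', blocks m b hm c.toNat]
  have hp := period_sum m b u hm hu
  linear_combination (c.toNat : ℤ) * hp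

lemma L4 (m b A : ℤ) (hm : 0 < m) (hdvd : m ∣ (A * b + 1)) (hA : 0 ≤ A) :
    2 * ∑ k ∈ Ico (1:ℤ) (A + 1), (k * b) % m = (A + 1) * (m - 1) := by
  have key : ∀ k : ℤ, ((A - k) * b) % m = m - 1 - (k * b) % m := by
    intro k
    obtain ⟨c, hc⟩ := hdvd
    have : (A - k) * b = (-1 - k * b) + m * c := by linarith [hc]
    rw [this, Int.add_mul_emod_self_left, mod_refl m (k * b) hm]
  rw [drop_zero (fun k => (k * b) % m) A hA (by simp)]
  have hr := refl_sum (fun k => (k * b) % m) 0 (A + 1) A (by ring)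
  have hcard : (((Ico (0:ℤ) (A+1)).card) : ℤ) = A + 1 := by rw [Int.card_Ico]; omega
  calc 2 * ∑ k ∈ Ico (0:ℤ) (A+1), (k * b) % m
      = (∑ k ∈ Ico (0:ℤ) (A+1), (k * b) % m) + ∑ k ∈ Ico (0:ℤ) (A+1), ((A - k) * b) % m := by
        rw [← hr]; ring
    _ = ∑ k ∈ Ico (0:ℤ) (A+1), (m - 1) := by
        rw [← Finset.sum_add_distrib]
        exact Finset.sum_congr rfl (fun k _ => by rw [key k]; ring)
    _ = (A + 1) * (m - 1) := by rw [Finset.sum_const, nsmul_eq_mul, hcard]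

lemma ceil_helper_s12 (x a : ℤ) (ha : 0 < a) : ⌈(x:ℚ)/(a:ℚ)⌉ = -((-x)/a) := by
  have hcast : ((a.toNat : ℕ) : ℚ) = (a:ℚ) := by
    rw [← Int.cast_natCast, Int.toNat_of_nonneg ha.le]
  have h1 : ⌈(x:ℚ)/(a:ℚ)⌉ = -⌊-((x:ℚ)/(a:ℚ))⌋ := by
    rw [Int.floor_neg]; ring
  have h2 : -((x:ℚ)/(a:ℚ)) = (((-x : ℤ)):ℚ)/((a.toNat : ℕ) : ℚ) := by
    rw [hcast]; push_cast; ring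
  rw [h1, h2, Rat.floor_intCast_div_natCast, Int.toNat_of_nonneg ha.le]

lemma neg_reindex (f : ℤ → ℤ) (A : ℤ) :
    ∑ j ∈ Ico (-A) (0:ℤ), f j = ∑ k ∈ Ico (1:ℤ) (A+1), f (-k) := by
  apply Finset.sum_nbij' (fun j => -j) (fun k => -k) <;>
    simp_all [Finset.mem_Ico] <;> omega

/-- χ(0) = −t, i.e. Δ(−α) + Δ(−α+1) + ⋯ + Δ(−1) = −t. -/
theorem stmt_12 (n : ℕ) (hn : 3 ≤ n) (a : Fin (n - 1) → ℤ) (an : ℤ)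
    (ha : ∀ i, 2 ≤ a i) (han : 2 ≤ an)
    (hcop : ∀ i j, i ≠ j → IsCoprime (a i) (a j))
    (hcopn : ∀ i, IsCoprime (a i) an)
    (α P : ℤ) (hα : α = ∏ i, a i) (hP : P = α * an)
    (e0 : ℤ) (b : Fin (n - 1) → ℤ) (bn : ℤ)
    (hb : ∀ i, 1 ≤ b i ∧ b i < a i) (hbn : 1 ≤ bn ∧ bn < an)
    (heq : e0 * P + (∑ i, b i * (P / a i)) + bn * α = -1)
    (Δ : ℤ → ℤ)
    (hΔ : ∀ x : ℤ, Δ x = 1 + |e0| * x -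
      ((∑ i, ⌈(x * b i : ℚ) / (a i : ℚ)⌉) + ⌈(x * bn : ℚ) / (an : ℚ)⌉))
    (t : ℤ) (ht : 2 * t = ((n : ℤ) - 2) * α - (∑ i, α / a i) + 1) :
    ∑ j ∈ Finset.Ico (-α) (0 : ℤ), Δ j = -t := by
  have ha0 : ∀ i, (0:ℤ) < a i := fun i => by linarith [ha i]
  have han0 : (0:ℤ) < an := by linarith
  have hα0 : 0 < α := by
    rw [hα]; exact Finset.prod_pos (fun i _ => ha0 i)
  have hdvdα : ∀ i, a i ∣ α := fun i => hα ▸ Finset.dvd_prod_of_mem a (Finset.mem_univ i)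
  have hdiv : ∀ i, a i * (α / a i) = α := fun i => Int.mul_ediv_cancel' (hdvdα i)
  have hdivpos : ∀ i, 0 < α / a i := by
    intro i
    nlinarith [hdiv i, ha0 i, Int.ediv_nonneg hα0.le (ha0 i).le]
  have hprod_erase : ∀ j, α / a j = ∏ l ∈ Finset.univ.erase j, a l := by
    intro j
    have h1 : α = a j * ∏ l ∈ Finset.univ.erase j, a l := by
      rw [hα, ← Finset.mul_prod_erase _ _ (Finset.mem_univ j)]
    rw [h1, Int.mul_ediv_cancel_left _ (ne_of_gt (ha0 j))]
  have hPdiv : ∀ i, P / a i = an * (α / a i) := by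
    intro i
    obtain ⟨c, hc⟩ := hdvdα i
    rw [hP, hc, Int.mul_ediv_cancel_left _ (ne_of_gt (ha0 i)),
      (by ring : a i * c * an = a i * (c * an)),
      Int.mul_ediv_cancel_left _ (ne_of_gt (ha0 i))]
    ring
  have hai_dvd_div : ∀ i j, i ≠ j → a i ∣ (α / a j) := by
    intro i j hij
    rw [hprod_erase j]
    exact Finset.dvd_prod_of_mem a (by simp [Finset.mem_erase, hij])
  -- coprime inverse data for each i
  have hkey : ∀ i, a i ∣ (b i * (P / a i) + 1) := by
    intro i
    have hsplit : b i * (P / a i) + ∑ j ∈ Finset.univ.erase i, b j * (P / a j)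
        = ∑ j, b j * (P / a j) :=
      Finset.add_sum_erase Finset.univ (fun j => b j * (P / a j)) (Finset.mem_univ i)
    have hrw : b i * (P / a i) + 1 =
        -(e0 * P) - (∑ j ∈ Finset.univ.erase i, b j * (P / a j)) - bn * α := by
      linarith [heq, hsplit]
    rw [hrw]
    have d1 : a i ∣ e0 * P := Dvd.dvd.mul_left (dvd_trans (hdvdα i) ⟨an, hP⟩) e0
    have d2 : a i ∣ ∑ j ∈ Finset.univ.erase i, b j * (P / a j) := by
      apply Finset.dvd_sum
      intro j hj
      have hji : i ≠ j := fun h => (Finset.mem_erase.mp hj).1 h.symm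
      rw [hPdiv j]
      exact Dvd.dvd.mul_left (Dvd.dvd.mul_left (hai_dvd_div i j hji) an) (b j)
    have d3 : a i ∣ bn * α := Dvd.dvd.mul_left (hdvdα i) bn
    exact dvd_sub (dvd_sub (dvd_neg.mpr d1) d2) d3
  have hu : ∀ i, a i ∣ (b i * (-(P / a i)) - 1) := by
    intro i
    obtain ⟨c, hc⟩ := hkey i
    exact ⟨-c, by linarith⟩
  -- W and the an relation
  have hsum : ∑ i, b i * (P / a i) = an * ∑ i, b i * (α / a i) := by
    rw [Finset.mul_sum]
    exact Finset.sum_congr rfl fun i _ => by rw [hPdiv i]; ring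
  have hW : an * (-e0 * α - ∑ i, b i * (α / a i)) = α * bn + 1 := by
    linear_combination (-1) * heq + hsum + e0 * hP
  have hdvdn : an ∣ (α * bn + 1) := ⟨_, hW.symm⟩
  -- e0 < 0
  have hsum_pos : 0 ≤ ∑ i, b i * (P / a i) := by
    apply Finset.sum_nonneg
    intro i _
    rw [hPdiv i]
    nlinarith [mul_pos han0 (hdivpos i), (hb i).1]
  have hP0 : 0 < P := by rw [hP]; positivity
  have he0 : e0 < 0 := by
    by_contra h
    push_neg at h
    nlinarith [hbn.1]
  have habs : |e0| = -e0 := abs_of_neg he0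
  -- rewrite the sum
  rw [neg_reindex Δ α]
  have hΔneg : ∀ k : ℤ, Δ (-k) =
      1 - |e0| * k + ((∑ i, (k * b i) / (a i)) + (k * bn) / an) := by
    intro k
    rw [hΔ (-k)]
    have hc : ∀ (y m : ℤ), 0 < m →
        ⌈(((-k : ℤ)):ℚ) * ((y : ℤ):ℚ) / ((m : ℤ):ℚ)⌉ = -((k * y) / m) := by
      intro y m hm
      have h1 : (((-k : ℤ)):ℚ) * ((y : ℤ):ℚ) = (((-k * y : ℤ)):ℚ) := by push_cast; ring
      rw [h1, ceil_helper_s12 _ _ hm, (by ring : -(-k * y) = k * y)]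
    rw [hc bn an han0, Finset.sum_congr rfl (fun i _ => hc (b i) (a i) (ha0 i)),
      Finset.sum_neg_distrib]
    ring
  rw [Finset.sum_congr rfl (fun k _ => hΔneg k)]
  -- components
  set K := ∑ k ∈ Ico (1:ℤ) (α+1), k with hKdef
  set SB := ∑ i, b i * (α / a i) with hSBdef
  set SI := ∑ i, α / a i with hSIdef
  have hK : 2 * K = α * (α + 1) := by
    rw [hKdef, drop_zero (fun k => k) α hα0.le rfl]
    have := gauss (α + 1) (by omega)
    linarith
  have hcard1 : ∑ _k ∈ Ico (1:ℤ) (α+1), (1:ℤ) = α := by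
    rw [Finset.sum_const, nsmul_eq_mul, mul_one, Int.card_Ico]
    omega
  -- per-i floor sums
  have hFi : ∀ i, 2 * ∑ k ∈ Ico (1:ℤ) (α+1), (k * b i) / (a i)
      = b i * (α / a i) * (α + 1) - α + α / a i := by
    intro i
    have hM := L3 (a i) (b i) (-(P / a i)) α (ha0 i) (hu i) (hdvdα i) hα0.le
    have e1 : a i * ∑ k ∈ Ico (1:ℤ) (α+1), (k * b i) / (a i)
        = b i * K - ∑ k ∈ Ico (1:ℤ) (α+1), (k * b i) % (a i) := by
      rw [Finset.mul_sum]
      rw [Finset.sum_congr rfl (fun k _ => by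
        have := Int.mul_ediv_add_emod (k * b i) (a i)
        linarith : ∀ k ∈ Ico (1:ℤ) (α+1),
          a i * ((k * b i) / a i) = k * b i - (k * b i) % (a i))]
      rw [Finset.sum_sub_distrib]
      congr 1
      rw [hKdef, Finset.mul_sum]
      exact Finset.sum_congr rfl (fun k _ => by ring)
    have hc := hdiv i
    have hgoal : a i * (2 * ∑ k ∈ Ico (1:ℤ) (α+1), (k * b i) / (a i))
        = a i * (b i * (α / a i) * (α + 1) - α + α / a i) := by
      linear_combination 2 * e1 + b i * hK - hM - (b i * (α + 1) + 1) * hc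
    exact mul_left_cancel₀ (ne_of_gt (ha0 i)) hgoal
  have hFn : 2 * ∑ k ∈ Ico (1:ℤ) (α+1), (k * bn) / an
      = (α + 1) * (-e0 * α - SB) - (α + 1) := by
    have hM := L4 an bn α han0 hdvdn hα0.le
    have e1 : an * ∑ k ∈ Ico (1:ℤ) (α+1), (k * bn) / an
        = bn * K - ∑ k ∈ Ico (1:ℤ) (α+1), (k * bn) % an := by
      rw [Finset.mul_sum]
      rw [Finset.sum_congr rfl (fun k _ => by
        have := Int.mul_ediv_add_emod (k * bn) an
        linarith : ∀ k ∈ Ico (1:ℤ) (α+1),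
          an * ((k * bn) / an) = k * bn - (k * bn) % an)]
      rw [Finset.sum_sub_distrib]
      congr 1
      rw [hKdef, Finset.mul_sum]
      exact Finset.sum_congr rfl (fun k _ => by ring)
    have hgoal : an * (2 * ∑ k ∈ Ico (1:ℤ) (α+1), (k * bn) / an)
        = an * ((α + 1) * (-e0 * α - SB) - (α + 1)) := by
      linear_combination 2 * e1 + bn * hK - hM - (α + 1) * hW
    exact mul_left_cancel₀ (ne_of_gt han0) hgoal
  have hsumF : 2 * ∑ i, (∑ k ∈ Ico (1:ℤ) (α+1), (k * b i) / (a i))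
      = (α + 1) * SB - ((n:ℤ) - 1) * α + SI := by
    rw [Finset.mul_sum, Finset.sum_congr rfl (fun i _ => hFi i)]
    rw [Finset.sum_add_distrib, Finset.sum_sub_distrib]
    rw [Finset.sum_const, Finset.card_univ, Fintype.card_fin, nsmul_eq_mul]
    have hcast : (((n - 1 : ℕ)):ℤ) = (n:ℤ) - 1 := by omega
    rw [hcast, hSBdef, hSIdef, Finset.mul_sum]
    rw [Finset.sum_congr rfl (fun i _ => by ring : ∀ i ∈ Finset.univ,
      b i * (α / a i) * (α + 1) = (α + 1) * (b i * (α / a i)))]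
    try ring
  -- split the big sum
  have hsplit : ∑ k ∈ Ico (1:ℤ) (α+1),
      (1 - |e0| * k + ((∑ i, (k * b i) / (a i)) + (k * bn) / an))
      = (∑ _k ∈ Ico (1:ℤ) (α+1), (1:ℤ)) - |e0| * K
        + ((∑ i, ∑ k ∈ Ico (1:ℤ) (α+1), (k * b i) / (a i))
           + ∑ k ∈ Ico (1:ℤ) (α+1), (k * bn) / an) := by
    rw [Finset.sum_add_distrib, Finset.sum_sub_distrib, Finset.sum_add_distrib,
      Finset.sum_comm, ← Finset.mul_sum, hKdef]
  rw [hsplit, hcard1, habs]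
  have hfinal : 2 * (α - -e0 * K
      + ((∑ i, ∑ k ∈ Ico (1:ℤ) (α+1), (k * b i) / (a i))
         + ∑ k ∈ Ico (1:ℤ) (α+1), (k * bn) / an)) = 2 * (-t) := by
    linear_combination e0 * hK + hsumF + hFn + ht
  linarith
end

section
/- For every integer x: (1) if x ≤ (t−1)·a_n then χ(x) < 0; (2) if (t−1)·a_n < x ≤ t·a_n then χ(x) = 0; (3) if x > t·a_n then χ(x) > 0. -/
lemma ceil_succ_div (a k : ℤ) (ha : 2 ≤ a) :
    ⌈((k:ℚ) + 1) / a⌉ - ⌈(k:ℚ) / a⌉ = if a ∣ k then 1 else 0 := by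
  have ha0 : (0:ℚ) < (a:ℚ) := by exact_mod_cast (by omega : (0:ℤ) < a)
  by_cases h : a ∣ k
  · obtain ⟨m, rfl⟩ := h
    have h1 : ((a*m : ℤ):ℚ) / a = (m:ℤ) := by push_cast; field_simp
    have h2 : (((a*m : ℤ):ℚ) + 1) / a = (m:ℚ) + 1/a := by push_cast; field_simp
    rw [if_pos ⟨m, rfl⟩]
    rw [h1, h2, Int.ceil_intCast]
    have : ⌈(m:ℚ) + 1/a⌉ = m + 1 := by
      rw [add_comm, Int.ceil_add_intCast]
      have : ⌈(1:ℚ)/a⌉ = 1 := by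
        rw [Int.ceil_eq_iff]
        have hp : (0:ℚ) < 1/a := by positivity
        refine ⟨by push_cast; linarith, ?_⟩
        push_cast
        rw [div_le_one ha0]
        exact_mod_cast (by omega : (1:ℤ) ≤ a)
      omega
    omega
  · rw [if_neg h]
    have hle : (k:ℚ) ≤ (a:ℚ) * ⌈(k:ℚ)/a⌉ := by
      have := Int.le_ceil ((k:ℚ)/a)
      calc (k:ℚ) = ((k:ℚ)/a) * a := by field_simp
        _ ≤ (⌈(k:ℚ)/a⌉ : ℚ) * a := by exact mul_le_mul_of_nonneg_right this (le_of_lt ha0)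
        _ = (a:ℚ) * ⌈(k:ℚ)/a⌉ := by ring
    have hle' : k ≤ a * ⌈(k:ℚ)/a⌉ := by exact_mod_cast hle
    have hne : k ≠ a * ⌈(k:ℚ)/a⌉ := fun hc => h ⟨_, hc⟩
    have h1 : k + 1 ≤ a * ⌈(k:ℚ)/a⌉ := by omega
    have h2 : ⌈((k:ℚ)+1)/a⌉ ≤ ⌈(k:ℚ)/a⌉ := by
      rw [Int.ceil_le, div_le_iff₀ ha0]
      calc ((k:ℚ)+1) ≤ ((a * ⌈(k:ℚ)/a⌉ : ℤ) : ℚ) := by exact_mod_cast h1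
        _ = (⌈(k:ℚ)/a⌉:ℚ) * a := by push_cast; ring
    have h3 : ⌈(k:ℚ)/a⌉ ≤ ⌈((k:ℚ)+1)/a⌉ := by
      apply Int.ceil_le_ceil
      gcongr
      linarith
    omega

lemma ceil_add_ceil_neg (a k : ℤ) (ha : 0 < a) :
    ⌈(k:ℚ) / a⌉ + ⌈((-k : ℤ):ℚ) / a⌉ = if a ∣ k then 0 else 1 := by
  have ha0 : (0:ℚ) < (a:ℚ) := by exact_mod_cast ha
  by_cases h : a ∣ k
  · obtain ⟨m, rfl⟩ := h
    have h1 : ((a*m : ℤ):ℚ) / a = ((m:ℤ):ℚ) := by push_cast; field_simp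
    have h2 : ((-(a*m) : ℤ):ℚ) / a = ((-m : ℤ):ℚ) := by push_cast; field_simp
    rw [if_pos ⟨m, rfl⟩, h1, h2, Int.ceil_intCast, Int.ceil_intCast]; omega
  · rw [if_neg h]
    set c := ⌈(k:ℚ)/a⌉ with hc
    have hle : (k:ℚ) ≤ (a:ℚ) * c := by
      have := Int.le_ceil ((k:ℚ)/a)
      calc (k:ℚ) = ((k:ℚ)/a) * a := by field_simp
        _ ≤ (c : ℚ) * a := by exact mul_le_mul_of_nonneg_right this (le_of_lt ha0)
        _ = (a:ℚ) * c := by ring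
    have hle' : k ≤ a * c := by exact_mod_cast hle
    have hne : k ≠ a * c := fun hcc => h ⟨_, hcc⟩
    have hlt : k < a * c := lt_of_le_of_ne hle' hne
    have hlow : a * (c - 1) < k := by
      have h0 := Int.ceil_lt_add_one ((k:ℚ)/a)
      have h2 : ((c:ℚ) - 1) * a < k := by
        have h3 : ((c:ℚ) - 1) < (k:ℚ)/a := by linarith
        calc ((c:ℚ)-1)*a < ((k:ℚ)/a)*a := by exact mul_lt_mul_of_pos_right h3 ha0
          _ = k := by field_simp
      have h4 : ((a * (c-1) : ℤ) : ℚ) < (k:ℚ) := by push_cast; push_cast at h2; linarith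
      exact_mod_cast h4
    have hkey : ⌈((-k:ℤ):ℚ)/a⌉ = 1 - c := by
      rw [Int.ceil_eq_iff]
      constructor
      · rw [lt_div_iff₀ ha0]
        have h5 : ((a*c : ℤ):ℚ) > (k:ℚ) := by exact_mod_cast hlt
        push_cast at h5 ⊢; nlinarith
      · rw [div_le_iff₀ ha0]
        have h6 : ((a*(c-1) : ℤ):ℚ) < (k:ℚ) := by exact_mod_cast hlow
        push_cast at h6 ⊢; nlinarith
    omega

lemma count_window (d m : ℤ) (hd : 0 < d) (hm : d ∣ m) :
    ∑ j ∈ Finset.Ico m (m + d), (if d ∣ j then (1:ℤ) else 0) = 1 := by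
  rw [Finset.sum_eq_single_of_mem m (by simp [Finset.mem_Ico]; omega)]
  · simp [hm]
  · intro j hj hne
    simp only [Finset.mem_Ico] at hj
    rw [if_neg]
    intro hdj
    have h2 : d ∣ (j - m) := dvd_sub hdj hm
    have h1 : 0 < j - m := by omega
    have := Int.le_of_dvd h1 h2
    omega

lemma count_multiples (d A : ℤ) (hd : 0 < d) (hA : 0 ≤ A) :
    ∑ j ∈ Finset.Ico (0:ℤ) (d * A), (if d ∣ j then (1:ℤ) else 0) = A := by
  refine Int.le_induction (motive := fun A _ => (∑ j ∈ Finset.Ico (0:ℤ) (d * A), if d ∣ j then (1:ℤ) else 0) = A) ?_ ?_ A hA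
  · simp
  · intro A hA ih
    have h1 : d * (A + 1) = d * A + d := by ring
    have h0 : (0:ℤ) ≤ d * A := mul_nonneg (le_of_lt hd) hA
    rw [h1, ← Finset.Ico_union_Ico_eq_Ico h0 (by omega : d*A ≤ d*A + d),
      Finset.sum_union (Finset.Ico_disjoint_Ico_consecutive _ _ _), ih,
      count_window d (d*A) hd ⟨A, rfl⟩]

/-- (1) if x ≤ (t−1)·a_n then χ(x) < 0; (2) if (t−1)·a_n < x ≤ t·a_n then χ(x) = 0; (3) if x > t·a_n then χ(x) > 0. -/
theorem stmt_13 (n : ℕ) (hn : 3 ≤ n) (a : Fin (n - 1) → ℤ) (an : ℤ)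
    (ha : ∀ i, 2 ≤ a i) (han : 2 ≤ an)
    (hcop : ∀ i j, i ≠ j → IsCoprime (a i) (a j))
    (hcopn : ∀ i, IsCoprime (a i) an)
    (α P : ℤ) (hα : α = ∏ i, a i) (hP : P = α * an)
    (e0 : ℤ) (b : Fin (n - 1) → ℤ) (bn : ℤ)
    (hb : ∀ i, 1 ≤ b i ∧ b i < a i) (hbn : 1 ≤ bn ∧ bn < an)
    (heq : e0 * P + (∑ i, b i * (P / a i)) + bn * α = -1)
    (Δ : ℤ → ℤ)
    (hΔ : ∀ x : ℤ, Δ x = 1 + |e0| * x -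
      ((∑ i, ⌈(x * b i : ℚ) / (a i : ℚ)⌉) + ⌈(x * bn : ℚ) / (an : ℚ)⌉))
    (χ : ℤ → ℤ) (hχ : ∀ x : ℤ, χ x = ∑ j ∈ Finset.Ico (x - α) x, Δ j)
    (t : ℤ) (ht : 2 * t = ((n : ℤ) - 2) * α - (∑ i, α / a i) + 1) :
    ∀ x : ℤ,
      (x ≤ (t - 1) * an → χ x < 0) ∧
      ((t - 1) * an < x → x ≤ t * an → χ x = 0) ∧
      (t * an < x → 0 < χ x) := by
  have hapos : ∀ i, (0:ℤ) < a i := fun i => by linarith [ha i]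
  have hanpos : (0:ℤ) < an := by omega
  have hαpos : (0:ℤ) < α := hα ▸ Finset.prod_pos (fun i _ => hapos i)
  have hdvd : ∀ i, a i ∣ α := fun i => hα ▸ Finset.dvd_prod_of_mem a (Finset.mem_univ i)
  have hαA : ∀ i, a i * (α / a i) = α := fun i => Int.mul_ediv_cancel' (hdvd i)
  have hAnn : ∀ i, 0 < α / a i := by
    intro i
    nlinarith [hαA i, hapos i]
  -- rewrite heq
  have hPA : ∀ i, P / a i = α / a i * an := by
    intro i
    have h1 : P = a i * (α / a i * an) := by rw [hP, ← mul_assoc, hαA i]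
    rw [h1, Int.mul_ediv_cancel_left _ (ne_of_gt (hapos i))]
  simp only [hPA] at heq
  rw [hP] at heq
  have hSan : (∑ i, b i * (α / a i * an)) = (∑ i, b i * (α / a i)) * an := by
    rw [Finset.sum_mul]
    exact Finset.sum_congr rfl (fun i _ => by ring)
  have heq2 : e0 * (α * an) + (∑ i, b i * (α / a i)) * an + bn * α = -1 := by
    rw [← hSan]; exact heq
  set M : ℤ := -(e0 * α + ∑ i, b i * (α / a i)) with hM
  have hm : α * bn + 1 = an * M := by rw [hM]; linear_combination heq2
  have hcopbn : IsCoprime an bn := ⟨M, -α, by linear_combination -hm⟩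
  have hdvd_iff : ∀ x : ℤ, an ∣ x * bn ↔ an ∣ x :=
    fun x => ⟨fun h => hcopbn.dvd_of_dvd_mul_right h, fun h => h.mul_right bn⟩
  have hSnn : 0 ≤ ∑ i, b i * (α / a i) :=
    Finset.sum_nonneg fun i _ => mul_nonneg (by linarith [(hb i).1]) (le_of_lt (hAnn i))
  have he0 : e0 < 0 := by
    by_contra hc
    push_neg at hc
    have h1 : 0 ≤ e0 * (α * an) := mul_nonneg hc (by positivity)
    have h2 : 0 ≤ (∑ i, b i * (α / a i)) * an := mul_nonneg hSnn (le_of_lt hanpos)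
    have h3 : 0 < bn * α := mul_pos (by linarith [hbn.1]) hαpos
    linarith
  have habs : |e0| = -e0 := abs_of_neg he0
  -- coprimality of a i and b i
  have hAprod : ∀ j, α / a j = ∏ k ∈ Finset.univ.erase j, a k := by
    intro j
    have h1 : a j * ∏ k ∈ Finset.univ.erase j, a k = α := by
      rw [hα]; exact Finset.mul_prod_erase Finset.univ a (Finset.mem_univ j)
    exact mul_left_cancel₀ (ne_of_gt (hapos j)) (by rw [hαA j, h1])
  have hcopi : ∀ i, IsCoprime (a i) (b i) := by
    intro i
    have hsplit : (∑ j, b j * (α / a j * an)) =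
        b i * (α / a i * an) + ∑ j ∈ Finset.univ.erase i, b j * (α / a j * an) :=
      (Finset.add_sum_erase Finset.univ (fun j => b j * (α / a j * an)) (Finset.mem_univ i)).symm
    rw [hsplit] at heq
    have hkey : b i * (α / a i * an) + 1 =
        -(e0 * (α * an)) - (∑ j ∈ Finset.univ.erase i, b j * (α / a j * an)) - bn * α := by
      linarith [heq]
    have hdvdrhs : a i ∣ b i * (α / a i * an) + 1 := by
      rw [hkey]
      have d1 : a i ∣ e0 * (α * an) := Dvd.dvd.mul_left (Dvd.dvd.mul_right (hdvd i) an) e0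
      have d2 : a i ∣ ∑ j ∈ Finset.univ.erase i, b j * (α / a j * an) := by
        apply Finset.dvd_sum
        intro j hj
        have hji : i ≠ j := Ne.symm (Finset.mem_erase.mp hj).1
        have : a i ∣ α / a j := by
          rw [hAprod j]
          exact Finset.dvd_prod_of_mem a (Finset.mem_erase.mpr ⟨hji, Finset.mem_univ i⟩)
        exact Dvd.dvd.mul_left (Dvd.dvd.mul_right this an) (b j)
      have d3 : a i ∣ bn * α := Dvd.dvd.mul_left (hdvd i) bn
      exact dvd_sub (dvd_sub (dvd_neg.mpr d1) d2) d3
    obtain ⟨w, hw⟩ := hdvdrhs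
    exact ⟨w, -(α / a i * an), by linear_combination -hw⟩
  have hdvd_iffi : ∀ i (j : ℤ), a i ∣ j * b i ↔ a i ∣ j :=
    fun i j => ⟨fun h => (hcopi i).dvd_of_dvd_mul_right h, fun h => h.mul_right (b i)⟩
  -- singleton sums
  have hsing : ∀ (f : ℤ → ℤ) (y : ℤ), ∑ j ∈ Finset.Ico y (y+1), f j = f y := by
    intro f y
    have : Finset.Ico y (y+1) = {y} := by
      ext z; simp only [Finset.mem_Ico, Finset.mem_singleton]; omega
    rw [this, Finset.sum_singleton]
  -- STEP Δ
  have stepΔ : ∀ x : ℤ, Δ x - Δ (x - α) = if an ∣ x then 1 else 0 := by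
    intro x
    rw [hΔ x, hΔ (x - α)]
    have h1 : ∀ i, ⌈((x - α : ℤ) : ℚ) * (b i : ℚ) / (a i : ℚ)⌉
        = ⌈(x : ℚ) * (b i : ℚ) / (a i : ℚ)⌉ - b i * (α / a i) := by
      intro i
      have hne : ((a i : ℚ)) ≠ 0 := by
        exact_mod_cast (ne_of_gt (hapos i))
      have hαi : (α : ℚ) = (a i : ℚ) * ((α / a i : ℤ) : ℚ) := by
        exact_mod_cast (hαA i).symm
      have hc : ((x - α : ℤ) : ℚ) * (b i : ℚ) / (a i : ℚ)
          = (x : ℚ) * (b i : ℚ) / (a i : ℚ) - ((b i * (α / a i) : ℤ) : ℚ) := by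
        push_cast
        rw [hαi]
        field_simp
      rw [hc, Int.ceil_sub_intCast]
    have hsum : (∑ i, ⌈((x - α : ℤ) : ℚ) * (b i : ℚ) / (a i : ℚ)⌉)
        = (∑ i, ⌈(x : ℚ) * (b i : ℚ) / (a i : ℚ)⌉) - ∑ i, b i * (α / a i) := by
      rw [← Finset.sum_sub_distrib]
      exact Finset.sum_congr rfl (fun i _ => h1 i)
    have hmQ : (α:ℚ) * bn + 1 = an * M := by exact_mod_cast hm
    have hanne : ((an : ℚ)) ≠ 0 := by
      exact_mod_cast (ne_of_gt hanpos)
    have h2 : ((x - α : ℤ) : ℚ) * (bn : ℚ) / (an : ℚ)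
        = (((x * bn : ℤ) : ℚ) + 1) / (an : ℚ) - ((M : ℤ) : ℚ) := by
      field_simp
      push_cast
      linear_combination -hmQ
    have h3 : ⌈((x - α : ℤ) : ℚ) * (bn : ℚ) / (an : ℚ)⌉
        = ⌈(((x * bn : ℤ) : ℚ) + 1) / (an : ℚ)⌉ - M := by
      rw [h2, Int.ceil_sub_intCast]
    have hceil := ceil_succ_div an (x * bn) han
    have hiteq : (if an ∣ x * bn then (1:ℤ) else 0) = (if an ∣ x then 1 else 0) := by
      by_cases h : an ∣ x
      · rw [if_pos h, if_pos ((hdvd_iff x).mpr h)]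
      · rw [if_neg h, if_neg (fun hc => h ((hdvd_iff x).mp hc))]
    rw [hiteq] at hceil
    have hcast : ((x * bn : ℤ) : ℚ) = (x : ℚ) * (bn : ℚ) := by push_cast; ring
    rw [hcast] at hceil h3
    rw [hsum, h3, habs, hM]
    linear_combination hceil
  -- STEP χ
  have stepχ : ∀ x : ℤ, χ (x + 1) = χ x + (if an ∣ x then 1 else 0) := by
    intro x
    rw [hχ (x+1), hχ x]
    have he : x + 1 - α = (x - α) + 1 := by ring
    rw [he]
    have hs1 : ∑ j ∈ Finset.Ico (x - α) (x + 1), Δ j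
        = ∑ j ∈ Finset.Ico (x - α) x, Δ j + ∑ j ∈ Finset.Ico x (x+1), Δ j := by
      rw [← Finset.Ico_union_Ico_eq_Ico (by linarith : x - α ≤ x) (by linarith : x ≤ x + 1),
        Finset.sum_union (Finset.Ico_disjoint_Ico_consecutive _ _ _)]
    have hs2 : ∑ j ∈ Finset.Ico (x - α) (x + 1), Δ j
        = ∑ j ∈ Finset.Ico (x - α) ((x - α) + 1), Δ j + ∑ j ∈ Finset.Ico ((x - α) + 1) (x+1), Δ j := by
      rw [← Finset.Ico_union_Ico_eq_Ico (by linarith : x - α ≤ (x - α) + 1) (by linarith : (x - α) + 1 ≤ x + 1),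
        Finset.sum_union (Finset.Ico_disjoint_Ico_consecutive _ _ _)]
    rw [hsing Δ x] at hs1
    rw [hsing Δ (x - α)] at hs2
    have := stepΔ x
    linarith
  -- telescoping
  have htel : ∀ y : ℤ, 0 ≤ y →
      χ y = χ 0 + ∑ j ∈ Finset.Ico (0:ℤ) y, (if an ∣ j then (1:ℤ) else 0) := by
    intro y hy
    refine Int.le_induction
      (motive := fun y _ => χ y = χ 0 + ∑ j ∈ Finset.Ico (0:ℤ) y, (if an ∣ j then (1:ℤ) else 0)) ?_ ?_ y hy
    · simp
    · intro y hy ih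
      rw [stepχ y, ih,
        ← Finset.Ico_union_Ico_eq_Ico hy (by linarith : y ≤ y + 1),
        Finset.sum_union (Finset.Ico_disjoint_Ico_consecutive _ _ _),
        hsing (fun j => if an ∣ j then (1:ℤ) else 0) y]
      ring
  -- χ 1 = χ 0 + 1
  have hχ1 : χ 1 = χ 0 + 1 := by
    have := stepχ 0
    rw [if_pos (dvd_zero an)] at this
    simpa using this
  -- reindexing
  have hresum : χ 1 = ∑ j ∈ Finset.Ico (0:ℤ) α, Δ (-j) := by
    rw [hχ 1]
    have himg : Finset.Ico (1 - α) 1 = Finset.image (fun j => -j) (Finset.Ico (0:ℤ) α) := by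
      ext z
      simp only [Finset.mem_Ico, Finset.mem_image]
      constructor
      · intro hz; exact ⟨-z, by omega, by omega⟩
      · rintro ⟨j, hj, rfl⟩; omega
    rw [himg, Finset.sum_image (fun x _ y _ h => by omega)]
  -- pointwise symmetric identity
  have hpt : ∀ j : ℤ, Δ j + Δ (-j) = (2 - (n:ℤ))
      + ((∑ i, if a i ∣ j then (1:ℤ) else 0) + (if an ∣ j then (1:ℤ) else 0)) := by
    intro j
    rw [hΔ j, hΔ (-j)]
    have hcount : ((Finset.univ : Finset (Fin (n-1))).card : ℤ) = (n : ℤ) - 1 := by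
      rw [Finset.card_univ, Fintype.card_fin]
      have : (1:ℕ) ≤ n := by omega
      push_cast [Nat.cast_sub this]
      ring
    have h1 : ∀ i, ⌈(j : ℚ) * (b i : ℚ) / (a i : ℚ)⌉ + ⌈((-j : ℤ) : ℚ) * (b i : ℚ) / (a i : ℚ)⌉
        = 1 - (if a i ∣ j then (1:ℤ) else 0) := by
      intro i
      have hcc := ceil_add_ceil_neg (a i) (j * b i) (hapos i)
      have hc1 : ((j * b i : ℤ) : ℚ) = (j:ℚ) * (b i : ℚ) := by push_cast; ring
      have hc2 : ((-(j * b i) : ℤ) : ℚ) = ((-j : ℤ) : ℚ) * (b i : ℚ) := by push_cast; ring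
      rw [hc1, hc2] at hcc
      have hiteq : (if a i ∣ j * b i then (0:ℤ) else 1) = (if a i ∣ j then (0:ℤ) else 1) := by
        by_cases h : a i ∣ j
        · rw [if_pos h, if_pos ((hdvd_iffi i j).mpr h)]
        · rw [if_neg h, if_neg (fun hc => h ((hdvd_iffi i j).mp hc))]
      rw [hiteq] at hcc
      rw [hcc]
      by_cases h : a i ∣ j <;> simp [h]
    have h2 : ⌈(j : ℚ) * (bn : ℚ) / (an : ℚ)⌉ + ⌈((-j : ℤ) : ℚ) * (bn : ℚ) / (an : ℚ)⌉
        = 1 - (if an ∣ j then (1:ℤ) else 0) := by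
      have hcc := ceil_add_ceil_neg an (j * bn) hanpos
      have hc1 : ((j * bn : ℤ) : ℚ) = (j:ℚ) * (bn : ℚ) := by push_cast; ring
      have hc2 : ((-(j * bn) : ℤ) : ℚ) = ((-j : ℤ) : ℚ) * (bn : ℚ) := by push_cast; ring
      rw [hc1, hc2] at hcc
      have hiteq : (if an ∣ j * bn then (0:ℤ) else 1) = (if an ∣ j then (0:ℤ) else 1) := by
        by_cases h : an ∣ j
        · rw [if_pos h, if_pos ((hdvd_iff j).mpr h)]
        · rw [if_neg h, if_neg (fun hc => h ((hdvd_iff j).mp hc))]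
      rw [hiteq] at hcc
      rw [hcc]
      by_cases h : an ∣ j <;> simp [h]
    have hsum2 : (∑ i, ⌈(j : ℚ) * (b i : ℚ) / (a i : ℚ)⌉)
        + (∑ i, ⌈((-j : ℤ) : ℚ) * (b i : ℚ) / (a i : ℚ)⌉)
        = ((n:ℤ) - 1) - ∑ i, (if a i ∣ j then (1:ℤ) else 0) := by
      rw [← Finset.sum_add_distrib]
      rw [show (∑ i, (⌈(j : ℚ) * (b i : ℚ) / (a i : ℚ)⌉ + ⌈((-j : ℤ) : ℚ) * (b i : ℚ) / (a i : ℚ)⌉))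
          = ∑ i, (1 - (if a i ∣ j then (1:ℤ) else 0)) from Finset.sum_congr rfl (fun i _ => h1 i)]
      rw [Finset.sum_sub_distrib, Finset.sum_const, ← hcount]
      push_cast
      ring
    -- now assemble
    have hx : |e0| * j + |e0| * (-j) = 0 := by ring
    linarith [hsum2, h2]
  -- symmetric sum
  have hsym : χ α + χ 1 = (2 - (n:ℤ)) * α + (∑ i, α / a i)
      + ∑ j ∈ Finset.Ico (0:ℤ) α, (if an ∣ j then (1:ℤ) else 0) := by
    rw [hresum, hχ α]
    rw [show α - α = (0:ℤ) by ring]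
    rw [← Finset.sum_add_distrib]
    rw [show (∑ j ∈ Finset.Ico (0:ℤ) α, (Δ j + Δ (-j)))
        = ∑ j ∈ Finset.Ico (0:ℤ) α, ((2 - (n:ℤ))
          + ((∑ i, if a i ∣ j then (1:ℤ) else 0) + (if an ∣ j then (1:ℤ) else 0)))
        from Finset.sum_congr rfl (fun j _ => hpt j)]
    rw [Finset.sum_add_distrib, Finset.sum_add_distrib, Finset.sum_const]
    rw [Finset.sum_comm]
    have hcard : ((Finset.Ico (0:ℤ) α).card : ℤ) = α := by
      rw [Int.card_Ico]
      simp [Int.toNat_of_nonneg (le_of_lt hαpos)]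
    have hcnt : ∀ i, (∑ j ∈ Finset.Ico (0:ℤ) α, if a i ∣ j then (1:ℤ) else 0) = α / a i := by
      intro i
      rw [show α = a i * (α / a i) from (hαA i).symm]
      rw [count_multiples (a i) (α / a i) (hapos i) (le_of_lt (hAnn i))]
      rw [Int.mul_ediv_cancel_left _ (ne_of_gt (hapos i))]
    rw [Finset.sum_congr rfl (fun i _ => hcnt i)]
    rw [nsmul_eq_mul, hcard]
    ring
  -- χ 0 = -t
  have hχα : χ α = χ 0 + ∑ j ∈ Finset.Ico (0:ℤ) α, (if an ∣ j then (1:ℤ) else 0) :=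
    htel α (le_of_lt hαpos)
  have hχ0 : χ 0 = -t := by
    have h1 := hsym
    rw [hχα, hχ1] at h1
    have h2 : 2 * χ 0 = (2 - (n:ℤ)) * α + (∑ i, α / a i) - 1 := by linarith
    have h3 : (2 - (n:ℤ)) * α = -(((n:ℤ) - 2) * α) := by ring
    linarith
  -- closed form
  have hfin : ∀ x : ℤ, χ x = ⌈(x : ℚ) / (an : ℚ)⌉ - t := by
    intro x
    induction x using Int.induction_on with
    | zero =>
      simp only [Int.cast_zero, zero_div, Int.ceil_zero, hχ0]
      ring
    | succ i ih =>
      have hs := stepχ (i : ℤ)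
      have hcd := ceil_succ_div an (i : ℤ) han
      have hcast : (((i:ℤ) + 1 : ℤ) : ℚ) = ((i:ℤ):ℚ) + 1 := by push_cast; ring
      rw [hcast]
      linarith
    | pred i ih =>
      have hs := stepχ (-(i:ℤ) - 1)
      rw [show -(i:ℤ) - 1 + 1 = -(i:ℤ) by ring] at hs
      have hcd := ceil_succ_div an (-(i:ℤ) - 1) han
      have hcast : ((-(i:ℤ) : ℤ) : ℚ) = ((-(i:ℤ) - 1 : ℤ) : ℚ) + 1 := by push_cast; ring
      rw [hcast] at ih
      linarith
  -- conclusion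
  intro x
  have hfx := hfin x
  have hanQ : (0:ℚ) < (an:ℚ) := by exact_mod_cast hanpos
  refine ⟨?_, ?_, ?_⟩
  · intro hx
    have h1 : ⌈(x : ℚ) / (an : ℚ)⌉ ≤ t - 1 := by
      rw [Int.ceil_le, div_le_iff₀ hanQ]
      have : (x:ℚ) ≤ ((t-1) * an : ℤ) := by exact_mod_cast hx
      push_cast at this ⊢
      linarith
    omega
  · intro hx1 hx2
    have h1 : ⌈(x : ℚ) / (an : ℚ)⌉ ≤ t := by
      rw [Int.ceil_le, div_le_iff₀ hanQ]
      have : (x:ℚ) ≤ (t * an : ℤ) := by exact_mod_cast hx2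
      push_cast at this ⊢
      linarith
    have h2 : t - 1 < ⌈(x : ℚ) / (an : ℚ)⌉ := by
      rw [Int.lt_ceil, lt_div_iff₀ hanQ]
      have : (((t-1) * an : ℤ) : ℚ) < (x:ℚ) := by exact_mod_cast hx1
      push_cast at this ⊢
      linarith
    omega
  · intro hx
    have h2 : t < ⌈(x : ℚ) / (an : ℚ)⌉ := by
      rw [Int.lt_ceil, lt_div_iff₀ hanQ]
      have : ((t * an : ℤ) : ℚ) < (x:ℚ) := by exact_mod_cast hx
      push_cast at this ⊢
      linarith
    omega
end

section
/- One has 12·s(b_n, a_n) − 12·s(b_n', a_n') = (a_n·a_n' − α² − 1)/(a_n·a_n'), where a_n' = a_n + α, b_n is the unique integer in [1, a_n) with α·b_n ≡ −1 (mod a_n), and b_n' is the unique integer in [1, a_n') with α·b_n' ≡ −1 (mod a_n'). -/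
open Finset

/-- sawtooth -/
private def sw (x : ℚ) : ℚ := if Int.fract x = 0 then 0 else x - ⌊x⌋ - 1/2

private lemma sw_eq (x : ℚ) : sw x = if Int.fract x = 0 then 0 else Int.fract x - 1/2 := by
  unfold sw
  rcases eq_or_ne (Int.fract x) 0 with h | h
  · simp [h]
  · rw [if_neg h, if_neg h, Int.self_sub_floor]

private lemma sw_int_add (n : ℤ) (x : ℚ) : sw ((n : ℚ) + x) = sw x := by
  rw [sw_eq, sw_eq, Int.fract_intCast_add]

private lemma sw_neg (x : ℚ) : sw (-x) = -sw x := by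
  rw [sw_eq, sw_eq]
  rcases eq_or_ne (Int.fract x) 0 with h | h
  · rw [if_pos h, if_pos (Int.fract_neg_eq_zero.mpr h)]; ring
  · rw [if_neg h, if_neg (fun hc => h (Int.fract_neg_eq_zero.mp hc)), Int.fract_neg h]; ring

private lemma sw_zero : sw 0 = 0 := by
  rw [sw_eq, if_pos]; exact Int.fract_zero

private lemma fract_div (a k : ℤ) (hk : 0 < k) :
    Int.fract ((a : ℚ) / (k : ℚ)) = ((a % k : ℤ) : ℚ) / (k : ℚ) := by
  have hk0 : (k : ℚ) ≠ 0 := Int.cast_ne_zero.mpr hk.ne'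
  conv_lhs => rw [← Int.mul_ediv_add_emod a k]
  push_cast
  rw [add_div, mul_div_cancel_left₀ _ hk0, Int.fract_intCast_add, Int.fract_eq_self.mpr]
  constructor
  · apply div_nonneg _ (le_of_lt (by exact_mod_cast hk))
    exact_mod_cast Int.emod_nonneg a hk.ne'
  · rw [div_lt_one (by exact_mod_cast hk)]
    exact_mod_cast Int.emod_lt_of_pos a hk

private lemma sw_div (a k : ℤ) (hk : 0 < k) (hnd : ¬ k ∣ a) :
    sw ((a : ℚ) / (k : ℚ)) = ((a % k : ℤ) : ℚ) / (k : ℚ) - 1/2 := by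
  have hk0 : (k : ℚ) ≠ 0 := Int.cast_ne_zero.mpr hk.ne'
  rw [sw_eq, fract_div a k hk, if_neg]
  intro h
  apply hnd
  rw [div_eq_zero_iff] at h
  rcases h with h | h
  · exact Int.dvd_of_emod_eq_zero (by exact_mod_cast h)
  · exact absurd h hk0

private lemma sw_div_congr (a x y : ℤ) (ha : 0 < a) (h : a ∣ x - y) :
    sw ((x : ℚ) / (a : ℚ)) = sw ((y : ℚ) / (a : ℚ)) := by
  have ha0 : (a : ℚ) ≠ 0 := Int.cast_ne_zero.mpr ha.ne'
  obtain ⟨t, ht⟩ := h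
  have hx : x = y + a * t := by linarith [ht]
  subst hx
  have : ((y + a * t : ℤ) : ℚ) / (a : ℚ) = (t : ℚ) + (y : ℚ) / (a : ℚ) := by
    field_simp; push_cast; ring
  rw [this, sw_int_add]


private lemma Ico_int_insert_bot (a b : ℤ) (h : a < b) :
    Finset.Ico a b = insert a (Finset.Ico (a + 1) b) := by
  ext x; simp only [Finset.mem_Ico, Finset.mem_insert]; omega

private lemma sum_Ico_bot {M : Type*} [AddCommMonoid M] (f : ℤ → M) (a b : ℤ) (h : a < b) :
    ∑ i ∈ Finset.Ico a b, f i = f a + ∑ i ∈ Finset.Ico (a + 1) b, f i := by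
  rw [Ico_int_insert_bot a b h, Finset.sum_insert (by simp)]

private lemma Ico_int_insert_top (a b : ℤ) (h : a ≤ b) :
    Finset.Ico a (b + 1) = insert b (Finset.Ico a b) := by
  ext x; simp only [Finset.mem_Ico, Finset.mem_insert]; omega

private lemma sum_Ico_top {M : Type*} [AddCommMonoid M] (f : ℤ → M) (a b : ℤ) (h : a ≤ b) :
    ∑ i ∈ Finset.Ico a (b + 1), f i = (∑ i ∈ Finset.Ico a b, f i) + f b := by
  rw [Ico_int_insert_top a b h, Finset.sum_insert (by simp), add_comm]

/-- Gauss sum over `Ico 1 k` in `ℤ`. -/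
private lemma sum_id (k : ℤ) (hk : 1 ≤ k) :
    2 * ∑ i ∈ Finset.Ico (1 : ℤ) k, i = k * (k - 1) := by
  refine Int.le_induction (motive := fun k _ => 2 * ∑ i ∈ Finset.Ico (1 : ℤ) k, i = k * (k - 1)) ?_ ?_ k hk
  · simp
  · intro n hn ih
    rw [sum_Ico_top _ 1 n hn, mul_add, ih]; ring

private lemma sum_sq (k : ℤ) (hk : 1 ≤ k) :
    6 * ∑ i ∈ Finset.Ico (1 : ℤ) k, i ^ 2 = k * (k - 1) * (2 * k - 1) := by
  refine Int.le_induction (motive := fun k _ => 6 * ∑ i ∈ Finset.Ico (1 : ℤ) k, i ^ 2 = k * (k - 1) * (2 * k - 1)) ?_ ?_ k hk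
  · simp
  · intro n hn ih
    rw [sum_Ico_top _ 1 n hn, mul_add, ih]; ring

private lemma sum_const_Ico (k c : ℤ) (hk : 1 ≤ k) :
    ∑ _i ∈ Finset.Ico (1 : ℤ) k, c = (k - 1) * c := by
  rw [Finset.sum_const, Int.card_Ico, nsmul_eq_mul]
  congr 1
  omega

/-- Reindexing by multiplication by a unit mod k. -/
private lemma perm_sum {M : Type*} [AddCommMonoid M] (f : ℤ → M) (h k : ℤ) (hk : 0 < k)
    (hc : IsCoprime h k) :
    ∑ i ∈ Finset.Ico (0 : ℤ) k, f (h * i % k) = ∑ i ∈ Finset.Ico (0 : ℤ) k, f i := by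
  obtain ⟨u, v, huv⟩ := hc
  have hmem : ∀ a : ℤ, a ∈ Finset.Ico (0 : ℤ) k → ∀ c : ℤ, c * a % k ∈ Finset.Ico (0 : ℤ) k := by
    intro a _ c
    simp only [Finset.mem_Ico]
    exact ⟨Int.emod_nonneg _ hk.ne', Int.emod_lt_of_pos _ hk⟩
  have hcancel : ∀ a : ℤ, a ∈ Finset.Ico (0 : ℤ) k → u * (h * a % k) % k = a := by
    intro a ha
    simp only [Finset.mem_Ico] at ha
    have h1 : u * (h * a % k) % k = u * (h * a) % k :=
      Int.ModEq.mul_left u (Int.emod_emod_of_dvd _ dvd_rfl)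
    rw [h1]
    have h2 : u * (h * a) = a + k * (-(v * a)) + (u * h + v * k - 1) * a := by ring
    rw [h2, huv]
    simpa using Int.emod_eq_of_lt ha.1 ha.2
  have hcancel' : ∀ a : ℤ, a ∈ Finset.Ico (0 : ℤ) k → h * (u * a % k) % k = a := by
    intro a ha
    simp only [Finset.mem_Ico] at ha
    have h1 : h * (u * a % k) % k = h * (u * a) % k :=
      Int.ModEq.mul_left h (Int.emod_emod_of_dvd _ dvd_rfl)
    rw [h1]
    have h2 : h * (u * a) = a + k * (-(v * a)) + (u * h + v * k - 1) * a := by ring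
    rw [h2, huv]
    simpa using Int.emod_eq_of_lt ha.1 ha.2
  exact Finset.sum_nbij' (fun i => h * i % k) (fun j => u * j % k)
    (fun a ha => hmem a ha h) (fun a ha => hmem a ha u)
    hcancel hcancel' (fun a _ => rfl)

/-- perm over `Ico 1 k`. -/
private lemma perm_sum₁ {M : Type*} [AddCancelCommMonoid M] (f : ℤ → M) (h k : ℤ) (hk : 0 < k)
    (hc : IsCoprime h k) :
    ∑ i ∈ Finset.Ico (1 : ℤ) k, f (h * i % k) = ∑ i ∈ Finset.Ico (1 : ℤ) k, f i := by
  have h0 := perm_sum f h k hk hc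
  rw [sum_Ico_bot _ 0 k hk] at h0
  rw [sum_Ico_bot f 0 k hk] at h0
  norm_num at h0
  exact h0


private lemma double_count (h k : ℤ) (hh : 0 < h) (hk : 0 < k) (hc : IsCoprime h k) :
    ∑ i ∈ Finset.Ico (1 : ℤ) k, ((h * i / k) * (h * i / k + 1))
      = 2 * ∑ ν ∈ Finset.Ico (1 : ℤ) h, (ν * (k - 1 - k * ν / h)) := by
  have key1 : ∀ i ∈ Finset.Ico (1 : ℤ) k,
      (h * i / k) * (h * i / k + 1)
        = 2 * ∑ ν ∈ Finset.Ico (1 : ℤ) h, (if k * ν < h * i then ν else 0) := by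
    intro i hi
    rw [Finset.mem_Ico] at hi
    have hi0 : 0 < i := hi.1
    have hm0 : 0 ≤ h * i / k := Int.ediv_nonneg (mul_nonneg hh.le (by omega)) hk.le
    have hmlt : h * i / k < h := by
      rw [Int.ediv_lt_iff_lt_mul hk]
      calc h * i < h * k := by exact mul_lt_mul_of_pos_left hi.2 hh
      _ = h * k := rfl
    have hset : (Finset.Ico (1 : ℤ) h).filter (fun ν => k * ν < h * i)
        = Finset.Ico (1 : ℤ) (h * i / k + 1) := by
      ext ν
      simp only [Finset.mem_filter, Finset.mem_Ico]
      constructor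
      · rintro ⟨⟨h1, _⟩, hlt⟩
        refine ⟨h1, ?_⟩
        have : ν ≤ h * i / k := (Int.le_ediv_iff_mul_le hk).mpr (by linarith [mul_comm k ν])
        omega
      · rintro ⟨h1, h2⟩
        have hle : ν * k ≤ h * i := (Int.le_ediv_iff_mul_le hk).mp (by omega)
        have hne : k * ν ≠ h * i := by
          intro heq
          have hdvd : k ∣ i := (hc.symm).dvd_of_dvd_mul_left ⟨ν, heq.symm⟩
          have := Int.le_of_dvd hi0 hdvd
          omega
        have hcomm : ν * k = k * ν := mul_comm ν k
        exact ⟨⟨h1, by omega⟩, by omega⟩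
    rw [← Finset.sum_filter, hset]
    have := sum_id (h * i / k + 1) (by omega)
    simp only [add_sub_cancel_right] at this
    linarith
  have key2 : ∀ ν ∈ Finset.Ico (1 : ℤ) h,
      (∑ i ∈ Finset.Ico (1 : ℤ) k, (if k * ν < h * i then ν else 0))
        = ν * (k - 1 - k * ν / h) := by
    intro ν hν
    rw [Finset.mem_Ico] at hν
    have hq0 : 0 ≤ k * ν / h := Int.ediv_nonneg (mul_nonneg hk.le (by omega)) hh.le
    have hqk : k * ν / h < k := by
      rw [Int.ediv_lt_iff_lt_mul hh]
      calc k * ν < k * h := by exact mul_lt_mul_of_pos_left hν.2 hk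
      _ = k * h := rfl
    have hset : (Finset.Ico (1 : ℤ) k).filter (fun i => k * ν < h * i)
        = Finset.Ico (k * ν / h + 1) k := by
      ext i
      simp only [Finset.mem_filter, Finset.mem_Ico]
      constructor
      · rintro ⟨⟨_, h2⟩, hlt⟩
        have : k * ν / h < i := by
          rw [Int.ediv_lt_iff_lt_mul hh]; linarith [mul_comm i h]
        omega
      · rintro ⟨h1, h2⟩
        have : k * ν < i * h := by
          have := (Int.ediv_lt_iff_lt_mul hh (a := k * ν) (b := i)).mp (by omega)
          exact this
        exact ⟨⟨by omega, h2⟩, by linarith [mul_comm i h]⟩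
    rw [← Finset.sum_filter, hset, Finset.sum_const, Int.card_Ico, nsmul_eq_mul]
    have : ((k - (k * ν / h + 1)).toNat : ℤ) = k - 1 - k * ν / h := by omega
    rw [this]; ring
  calc ∑ i ∈ Finset.Ico (1 : ℤ) k, ((h * i / k) * (h * i / k + 1))
      = ∑ i ∈ Finset.Ico (1 : ℤ) k,
          (2 * ∑ ν ∈ Finset.Ico (1 : ℤ) h, (if k * ν < h * i then ν else 0)) :=
        Finset.sum_congr rfl key1
    _ = 2 * ∑ i ∈ Finset.Ico (1 : ℤ) k,
          ∑ ν ∈ Finset.Ico (1 : ℤ) h, (if k * ν < h * i then ν else 0) := by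
        rw [Finset.mul_sum]
    _ = 2 * ∑ ν ∈ Finset.Ico (1 : ℤ) h,
          ∑ i ∈ Finset.Ico (1 : ℤ) k, (if k * ν < h * i then ν else 0) := by
        rw [Finset.sum_comm]
    _ = 2 * ∑ ν ∈ Finset.Ico (1 : ℤ) h, (ν * (k - 1 - k * ν / h)) := by
        rw [Finset.sum_congr rfl key2]


private lemma ML (h k : ℤ) (hh : 0 < h) (hk : 0 < k) (hc : IsCoprime h k) :
    12 * (h * (∑ i ∈ Finset.Ico (1 : ℤ) k, i * (h * i / k))
        + k * (∑ ν ∈ Finset.Ico (1 : ℤ) h, ν * (k * ν / h)))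
      = (h ^ 2 - 1) * (k - 1) * (2 * k - 1) + 3 * k * (h - 1) * (k - 1) * (2 * h - 1) := by
  set S1 := ∑ i ∈ Finset.Ico (1 : ℤ) k, i with hS1
  set S2 := ∑ i ∈ Finset.Ico (1 : ℤ) k, i ^ 2 with hS2
  set M1 := ∑ i ∈ Finset.Ico (1 : ℤ) k, (h * i / k) with hM1
  set M2 := ∑ i ∈ Finset.Ico (1 : ℤ) k, (h * i / k) ^ 2 with hM2
  set D := ∑ i ∈ Finset.Ico (1 : ℤ) k, i * (h * i / k) with hD
  set E := ∑ ν ∈ Finset.Ico (1 : ℤ) h, ν * (k * ν / h) with hE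
  set Sν := ∑ ν ∈ Finset.Ico (1 : ℤ) h, ν with hSν
  -- equation 1 : from the permutation of squares
  have e1 : h ^ 2 * S2 - 2 * (h * k) * D + k ^ 2 * M2 = S2 := by
    have hperm := perm_sum₁ (fun x => x ^ 2) h k hk hc
    have hexp : ∑ i ∈ Finset.Ico (1 : ℤ) k, (h * i % k) ^ 2
        = ∑ i ∈ Finset.Ico (1 : ℤ) k,
            (h ^ 2 * i ^ 2 - 2 * (h * k) * (i * (h * i / k)) + k ^ 2 * (h * i / k) ^ 2) := by
      refine Finset.sum_congr rfl fun i _ => ?_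
      rw [Int.emod_def]; ring
    rw [hexp] at hperm
    rw [Finset.sum_add_distrib, Finset.sum_sub_distrib, ← Finset.mul_sum, ← Finset.mul_sum,
      ← Finset.mul_sum] at hperm
    exact hperm
  -- equation 2 : from the permutation (first powers)
  have e2 : h * S1 - k * M1 = S1 := by
    have hperm := perm_sum₁ (fun x => x) h k hk hc
    have hexp : ∑ i ∈ Finset.Ico (1 : ℤ) k, (h * i % k)
        = ∑ i ∈ Finset.Ico (1 : ℤ) k, (h * i - k * (h * i / k)) := by
      refine Finset.sum_congr rfl fun i _ => ?_
      rw [Int.emod_def]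
    rw [hexp] at hperm
    rw [Finset.sum_sub_distrib, ← Finset.mul_sum, ← Finset.mul_sum] at hperm
    exact hperm
  -- equation 3 : double counting
  have e3 : M2 + M1 = 2 * ((k - 1) * Sν - E) := by
    have hdc := double_count h k hh hk hc
    have hl : ∑ i ∈ Finset.Ico (1 : ℤ) k, ((h * i / k) * (h * i / k + 1)) = M2 + M1 := by
      rw [hM2, hM1, ← Finset.sum_add_distrib]
      refine Finset.sum_congr rfl fun i _ => ?_
      ring
    have hr : ∑ ν ∈ Finset.Ico (1 : ℤ) h, (ν * (k - 1 - k * ν / h)) = (k - 1) * Sν - E := by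
      rw [hSν, hE, Finset.mul_sum, ← Finset.sum_sub_distrib]
      refine Finset.sum_congr rfl fun ν _ => ?_
      ring
    rw [hl, hr] at hdc
    exact hdc
  have e4 : 2 * S1 = k * (k - 1) := sum_id k hk
  have e5 : 6 * S2 = k * (k - 1) * (2 * k - 1) := sum_sq k hk
  have e6 : 2 * Sν = h * (h - 1) := sum_id h hh
  have hkey : k * (12 * (h * D + k * E))
      = k * ((h ^ 2 - 1) * (k - 1) * (2 * k - 1) + 3 * k * (h - 1) * (k - 1) * (2 * h - 1)) := by
    linear_combination (-6 : ℤ) * e1 + 6 * k * e2 + 6 * k ^ 2 * e3 + (-3 * k * (h - 1)) * e4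
      + (h ^ 2 - 1) * e5 + 6 * k ^ 2 * (k - 1) * e6
  exact mul_left_cancel₀ hk.ne' hkey

/-- Dedekind sum -/
private noncomputable def dd (h k : ℤ) : ℚ :=
  ∑ i ∈ Finset.Ico (1 : ℤ) k, sw ((i : ℚ) / (k : ℚ)) * sw (((h : ℚ) * (i : ℚ)) / (k : ℚ))

private lemma dd_val (h k : ℤ) (hk : 0 < k) (hc : IsCoprime h k) :
    12 * (k : ℚ) ^ 2 * dd h k
      = ((12 * (∑ i ∈ Finset.Ico (1 : ℤ) k, i * (h * i % k)) - 3 * k ^ 2 * (k - 1) : ℤ) : ℚ) := by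
  have hk0 : (k : ℚ) ≠ 0 := Int.cast_ne_zero.mpr hk.ne'
  have step1 : 12 * (k : ℚ) ^ 2 * dd h k
      = ((∑ i ∈ Finset.Ico (1 : ℤ) k,
          (12 * (i * (h * i % k)) - 6 * k * i - 6 * k * (h * i % k) + 3 * k ^ 2) : ℤ) : ℚ) := by
    rw [dd, Finset.mul_sum]
    push_cast
    refine Finset.sum_congr rfl fun i hi => ?_
    rw [Finset.mem_Ico] at hi
    have hnd1 : ¬ k ∣ i := fun hd => by have := Int.le_of_dvd (by omega) hd; omega
    have hnd2 : ¬ k ∣ h * i := fun hd => hnd1 ((hc.symm).dvd_of_dvd_mul_left hd)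
    have hsw1 : sw ((i : ℚ) / (k : ℚ)) = (i : ℚ) / (k : ℚ) - 1/2 := by
      rw [sw_div i k hk hnd1, Int.emod_eq_of_lt (by omega) hi.2]
    have hsw2 : sw (((h : ℚ) * (i : ℚ)) / (k : ℚ))
        = ((h * i % k : ℤ) : ℚ) / (k : ℚ) - 1/2 := by
      rw [show ((h : ℚ) * (i : ℚ)) = ((h * i : ℤ) : ℚ) by push_cast; ring,
        sw_div (h * i) k hk hnd2]
    rw [hsw1, hsw2]
    push_cast
    field_simp
    ring
  rw [step1]
  have hSr : ∑ i ∈ Finset.Ico (1 : ℤ) k, (h * i % k) = ∑ i ∈ Finset.Ico (1 : ℤ) k, i :=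
    perm_sum₁ (fun x => x) h k hk hc
  have hconst : ∑ _i ∈ Finset.Ico (1 : ℤ) k, (3 * k ^ 2 : ℤ) = (k - 1) * (3 * k ^ 2) :=
    sum_const_Ico k _ hk
  have e4 : 2 * ∑ i ∈ Finset.Ico (1 : ℤ) k, i = k * (k - 1) := sum_id k hk
  congr 1
  have expand : ∑ i ∈ Finset.Ico (1 : ℤ) k,
      (12 * (i * (h * i % k)) - 6 * k * i - 6 * k * (h * i % k) + 3 * k ^ 2 : ℤ)
      = 12 * (∑ i ∈ Finset.Ico (1 : ℤ) k, i * (h * i % k))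
        - 6 * k * (∑ i ∈ Finset.Ico (1 : ℤ) k, i)
        - 6 * k * (∑ i ∈ Finset.Ico (1 : ℤ) k, (h * i % k))
        + (k - 1) * (3 * k ^ 2) := by
    rw [Finset.sum_add_distrib, Finset.sum_sub_distrib, Finset.sum_sub_distrib,
      ← Finset.mul_sum, ← Finset.mul_sum, ← Finset.mul_sum, hconst]
  rw [expand, hSr]
  linear_combination (-6 * k : ℤ) * e4


private lemma recip (h k : ℤ) (hh : 0 < h) (hk : 0 < k) (hc : IsCoprime h k) :
    12 * dd h k + 12 * dd k h
      = ((h ^ 2 + k ^ 2 - 3 * h * k + 1 : ℤ) : ℚ) / ((h * k : ℤ) : ℚ) := by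
  have hk0 : (k : ℚ) ≠ 0 := Int.cast_ne_zero.mpr hk.ne'
  have hh0 : (h : ℚ) ≠ 0 := Int.cast_ne_zero.mpr hh.ne'
  set Rhk := ∑ i ∈ Finset.Ico (1 : ℤ) k, i * (h * i % k) with hRhk
  set Rkh := ∑ i ∈ Finset.Ico (1 : ℤ) h, i * (k * i % h) with hRkh
  set D := ∑ i ∈ Finset.Ico (1 : ℤ) k, i * (h * i / k) with hDdef
  set E := ∑ i ∈ Finset.Ico (1 : ℤ) h, i * (k * i / h) with hEdef
  have hS2 : 6 * ∑ i ∈ Finset.Ico (1 : ℤ) k, i ^ 2 = k * (k - 1) * (2 * k - 1) := sum_sq k hk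
  have hS2' : 6 * ∑ i ∈ Finset.Ico (1 : ℤ) h, i ^ 2 = h * (h - 1) * (2 * h - 1) := sum_sq h hh
  have hRD : Rhk = h * (∑ i ∈ Finset.Ico (1 : ℤ) k, i ^ 2) - k * D := by
    rw [hRhk, hDdef, Finset.mul_sum, Finset.mul_sum, ← Finset.sum_sub_distrib]
    refine Finset.sum_congr rfl fun i _ => ?_
    rw [Int.emod_def]; ring
  have hRE : Rkh = k * (∑ i ∈ Finset.Ico (1 : ℤ) h, i ^ 2) - h * E := by
    rw [hRkh, hEdef, Finset.mul_sum, Finset.mul_sum, ← Finset.sum_sub_distrib]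
    refine Finset.sum_congr rfl fun i _ => ?_
    rw [Int.emod_def]; ring
  have hml := ML h k hh hk hc
  have key : h ^ 2 * (12 * Rhk - 3 * k ^ 2 * (k - 1)) + k ^ 2 * (12 * Rkh - 3 * h ^ 2 * (h - 1))
      = h * k * (h ^ 2 + k ^ 2 - 3 * h * k + 1) := by
    linear_combination (12 * h ^ 2 : ℤ) * hRD + (12 * k ^ 2 : ℤ) * hRE
      + (2 * h ^ 3 : ℤ) * hS2 + (2 * k ^ 3 : ℤ) * hS2' + (- h * k : ℤ) * hml
  have v1 : 12 * dd h k = ((12 * Rhk - 3 * k ^ 2 * (k - 1) : ℤ) : ℚ) / (k : ℚ) ^ 2 := by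
    rw [eq_div_iff (pow_ne_zero 2 hk0)]
    have := dd_val h k hk hc
    linear_combination this
  have v2 : 12 * dd k h = ((12 * Rkh - 3 * h ^ 2 * (h - 1) : ℤ) : ℚ) / (h : ℚ) ^ 2 := by
    rw [eq_div_iff (pow_ne_zero 2 hh0)]
    have := dd_val k h hh hc.symm
    linear_combination this
  rw [v1, v2]
  have keyQ : ((h : ℚ)) ^ 2 * (12 * (Rhk : ℚ) - 3 * (k : ℚ) ^ 2 * ((k : ℚ) - 1))
      + (k : ℚ) ^ 2 * (12 * (Rkh : ℚ) - 3 * (h : ℚ) ^ 2 * ((h : ℚ) - 1))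
      = (h : ℚ) * (k : ℚ) * ((h : ℚ) ^ 2 + (k : ℚ) ^ 2 - 3 * (h : ℚ) * (k : ℚ) + 1) := by
    exact_mod_cast congrArg (fun z : ℤ => (z : ℚ)) key
  field_simp
  push_cast
  linear_combination ((h : ℚ) * (k : ℚ)) * keyQ

private lemma dd_period (h k : ℤ) (hk : 0 < k) : dd (h + k) k = dd h k := by
  have hk0 : (k : ℚ) ≠ 0 := Int.cast_ne_zero.mpr hk.ne'
  unfold dd
  refine Finset.sum_congr rfl fun i _ => ?_
  congr 1
  have : (((h + k : ℤ) : ℚ) * (i : ℚ)) / (k : ℚ) = (i : ℚ) + ((h : ℚ) * (i : ℚ)) / (k : ℚ) := by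
    push_cast; field_simp; ring
  rw [this]
  exact_mod_cast sw_int_add i _

private lemma dd_neg_inv (a b c : ℤ) (ha : 0 < a) (hc : IsCoprime c a) (hb : a ∣ c * b + 1) :
    dd b a = - dd c a := by
  have ha0 : (a : ℚ) ≠ 0 := Int.cast_ne_zero.mpr ha.ne'
  have hzero : ∀ x : ℤ, sw ((x : ℚ) / (a : ℚ)) * sw (((b : ℚ) * (x : ℚ)) / (a : ℚ))
      = sw ((x : ℚ) / (a : ℚ)) * sw (((b * x : ℤ) : ℚ) / (a : ℚ)) := by
    intro x; push_cast; ring_nf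
  -- express dd b a as a sum over Ico 0 a and reindex
  have h1 : dd b a = ∑ i ∈ Finset.Ico (0 : ℤ) a,
      (sw ((i : ℚ) / (a : ℚ)) * sw (((b : ℚ) * (i : ℚ)) / (a : ℚ))) := by
    rw [dd, sum_Ico_bot _ 0 a ha]
    norm_num [sw_zero]
  have h2 : dd c a = ∑ i ∈ Finset.Ico (0 : ℤ) a,
      (sw ((i : ℚ) / (a : ℚ)) * sw (((c : ℚ) * (i : ℚ)) / (a : ℚ))) := by
    rw [dd, sum_Ico_bot _ 0 a ha]
    norm_num [sw_zero]
  rw [h1, h2, ← perm_sum (fun j => sw ((j : ℚ) / (a : ℚ)) * sw (((b : ℚ) * (j : ℚ)) / (a : ℚ)))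
    c a ha hc, ← Finset.sum_neg_distrib]
  refine Finset.sum_congr rfl fun i hi => ?_
  rw [Finset.mem_Ico] at hi
  -- j := c * i % a
  have e1 : sw (((c * i % a : ℤ) : ℚ) / (a : ℚ)) = sw (((c * i : ℤ) : ℚ) / (a : ℚ)) := by
    apply sw_div_congr _ _ _ ha
    rw [Int.emod_def]
    exact ⟨-(c * i / a), by ring⟩
  have e2 : sw (((b * (c * i % a) : ℤ) : ℚ) / (a : ℚ)) = sw (((-i : ℤ) : ℚ) / (a : ℚ)) := by
    apply sw_div_congr _ _ _ ha
    obtain ⟨t, ht⟩ := hb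
    refine ⟨b * (-(c * i / a)) + t * i, ?_⟩
    rw [Int.emod_def]
    have : c * b + 1 = a * t := ht
    nlinarith [this]
  have e3 : sw (((-i : ℤ) : ℚ) / (a : ℚ)) = - sw ((i : ℚ) / (a : ℚ)) := by
    rw [show ((-i : ℤ) : ℚ) / (a : ℚ) = -((i : ℚ) / (a : ℚ)) by push_cast; ring]
    exact sw_neg _
  calc sw (((c * i % a : ℤ) : ℚ) / (a : ℚ)) * sw (((b : ℚ) * ((c * i % a : ℤ) : ℚ)) / (a : ℚ))
      = sw (((c * i % a : ℤ) : ℚ) / (a : ℚ)) * sw (((b * (c * i % a) : ℤ) : ℚ) / (a : ℚ)) := by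
        push_cast; ring_nf
    _ = sw (((c * i : ℤ) : ℚ) / (a : ℚ)) * (- sw ((i : ℚ) / (a : ℚ))) := by rw [e1, e2, e3]
    _ = -(sw ((i : ℚ) / (a : ℚ)) * sw (((c : ℚ) * (i : ℚ)) / (a : ℚ))) := by push_cast; ring

/-- `12·s(b_n, a_n) − 12·s(b_n', a_n') = (a_n·a_n' − α² − 1)/(a_n·a_n')`,
where `a_n' = a_n + α`, `b_n` is the unique integer in `[1, a_n)` with
`α·b_n ≡ −1 (mod a_n)`, and `b_n'` is the unique integer in `[1, a_n')` with
`α·b_n' ≡ −1 (mod a_n')`.  Here `s(h,k) = Σ_{i=1}^{k−1} ⟨i/k⟩·⟨h·i/k⟩` is the Dedekind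
sum, `⟨x⟩` the sawtooth function (`0` for `x ∈ ℤ`, else `x − ⌊x⌋ − 1/2`). -/
theorem stmt_15 (α an : ℤ) (hα2 : 2 ≤ α) (han : 2 ≤ an)
    (hcop : IsCoprime α an)
    (an' : ℤ) (han' : an' = an + α)
    (bn : ℤ) (hbn : 1 ≤ bn ∧ bn < an ∧ α * bn ≡ -1 [ZMOD an])
    (bn' : ℤ) (hbn' : 1 ≤ bn' ∧ bn' < an' ∧ α * bn' ≡ -1 [ZMOD an'])
    (saw : ℚ → ℚ)
    (hsaw : ∀ x : ℚ, saw x = if Int.fract x = 0 then 0 else x - ⌊x⌋ - 1/2)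
    (ded : ℤ → ℤ → ℚ)
    (hded : ∀ h k : ℤ, ded h k =
      ∑ i ∈ Finset.Ico (1 : ℤ) k, saw ((i : ℚ) / (k : ℚ)) * saw ((h * i : ℚ) / (k : ℚ))) :
    12 * ded bn an - 12 * ded bn' an' =
      ((an * an' - α ^ 2 - 1 : ℤ) : ℚ) / ((an * an' : ℤ) : ℚ) := by
  have hded' : ∀ h k : ℤ, ded h k = dd h k := by
    intro h k
    rw [hded, dd]
    refine Finset.sum_congr rfl fun i _ => ?_
    rw [hsaw, hsaw]
    rfl
  have hα0 : 0 < α := by omega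
  have han0 : 0 < an := by omega
  have han'0 : 0 < an' := by omega
  have hcop' : IsCoprime α an' := by
    rw [han']
    simpa using hcop.add_mul_left_right 1
  have hdvd1 : an ∣ α * bn + 1 := by
    have := hbn.2.2.dvd
    have h2 : an ∣ -(-1 - α * bn) := this.neg_right
    simpa using h2
  have hdvd2 : an' ∣ α * bn' + 1 := by
    have := hbn'.2.2.dvd
    have h2 : an' ∣ -(-1 - α * bn') := this.neg_right
    simpa using h2
  rw [hded', hded', dd_neg_inv an bn α han0 hcop hdvd1, dd_neg_inv an' bn' α han'0 hcop' hdvd2]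
  have r1 := recip α an hα0 han0 hcop
  have r2 := recip α an' hα0 han'0 hcop'
  have hper : dd an' α = dd an α := by
    rw [han']; exact dd_period an α hα0
  rw [han'] at *
  have hq1 : (α : ℚ) ≠ 0 := Int.cast_ne_zero.mpr hα0.ne'
  have hq2 : (an : ℚ) ≠ 0 := Int.cast_ne_zero.mpr han0.ne'
  have hq3 : ((an : ℚ) + (α : ℚ)) ≠ 0 := by
    have : (0 : ℚ) < (an : ℚ) + (α : ℚ) := by
      push_cast
      have : (0 : ℤ) < an + α := by omega
      exact_mod_cast this
    linarith
  -- goal : 12 * (-dd α an) - 12 * (-dd α (an + α)) = _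
  -- use r1, r2, hper to eliminate dd's
  have expand1 : 12 * dd α an
      = ((α ^ 2 + an ^ 2 - 3 * α * an + 1 : ℤ) : ℚ) / ((α * an : ℤ) : ℚ) - 12 * dd an α := by
    linarith [r1]
  have expand2 : 12 * dd α (an + α)
      = ((α ^ 2 + (an + α) ^ 2 - 3 * α * (an + α) + 1 : ℤ) : ℚ) / ((α * (an + α) : ℤ) : ℚ)
        - 12 * dd an α := by
    rw [← hper]; linarith [r2]
  rw [show (12 : ℚ) * -dd α an - 12 * -dd α (an + α)
      = 12 * dd α (an + α) - 12 * dd α an by ring, expand1, expand2]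
  push_cast
  field_simp
  ring
end

section
/- The Δ-functions of Y = Σ(a_1,…,a_n) and Y' = Σ(a_1,…,a_{n−1},a_n+α) agree on their respective critical strips: for every integer i with 0 < i ≤ α, one has Δ((t−1)·a_n − α + i) = Δ'((t−1)·(a_n+α) − α + i). -/
lemma ceil_int_div_eq_iff (p d N : ℤ) (hd : 0 < d) :
    ⌈(p : ℚ) / d⌉ = N ↔ d * N - d < p ∧ p ≤ d * N := by
  have hd' : (0 : ℚ) < (d : ℚ) := by exact_mod_cast hd
  rw [Int.ceil_eq_iff]
  constructor
  · rintro ⟨h1, h2⟩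
    have h2' := (div_le_iff₀ hd').mp h2
    have h1' := (lt_div_iff₀ hd').mp h1
    have g1 : ((d * N - d : ℤ) : ℚ) < (p : ℚ) := by push_cast; nlinarith
    have g2 : ((p : ℤ) : ℚ) ≤ ((d * N : ℤ) : ℚ) := by push_cast; nlinarith
    exact ⟨by exact_mod_cast g1, by exact_mod_cast g2⟩
  · rintro ⟨h1, h2⟩
    have h1' : ((d * N - d : ℤ) : ℚ) < p := by exact_mod_cast h1
    have h2' : ((p : ℤ) : ℚ) ≤ ((d * N : ℤ) : ℚ) := by exact_mod_cast h2
    push_cast at h1' h2'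
    constructor
    · rw [lt_div_iff₀ hd']; nlinarith
    · rw [div_le_iff₀ hd']; nlinarith

lemma ceil_shift (p p' d d' c w : ℤ) (hd : 0 < d) (hd' : 0 < d')
    (hw0 : w ≤ 0) (hw1 : -d' < w) (h : p' * d = p * d' + w + c * d * d') :
    ⌈(p' : ℚ) / d'⌉ = ⌈(p : ℚ) / d⌉ + c := by
  set N := ⌈(p : ℚ) / d⌉ with hN
  have hNd := (ceil_int_div_eq_iff p d N hd).mp rfl
  rw [ceil_int_div_eq_iff _ _ _ hd']
  obtain ⟨hl, hr⟩ := hNd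
  have hl1 : d * N - d + 1 ≤ p := hl
  have hw1' : -d' + 1 ≤ w := hw1
  constructor
  · have key : (d' * (N + c) - d') * d < p' * d := by
      rw [h]; nlinarith [mul_le_mul_of_nonneg_right hl1 hd'.le]
    exact lt_of_mul_lt_mul_right key hd.le
  · have key : p' * d ≤ (d' * (N + c)) * d := by
      rw [h]; nlinarith [mul_le_mul_of_nonneg_right hr hd'.le]
    exact le_of_mul_le_mul_right key hd

lemma ceil_shift' (x b d x' b' d' c w : ℤ) (hd : 0 < d) (hd' : 0 < d')
    (hw0 : w ≤ 0) (hw1 : -d' < w) (h : x' * b' * d = x * b * d' + w + c * d * d') :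
    ⌈(x' : ℚ) * (b' : ℚ) / (d' : ℚ)⌉ = ⌈(x : ℚ) * (b : ℚ) / (d : ℚ)⌉ + c := by
  have h1 : ((x' * b' : ℤ) : ℚ) = (x' : ℚ) * b' := by push_cast; ring
  have h2 : ((x * b : ℤ) : ℚ) = (x : ℚ) * b := by push_cast; ring
  rw [← h1, ← h2]
  exact ceil_shift _ _ _ _ _ _ hd hd' hw0 hw1 h

set_option maxHeartbeats 1000000 in
/-- The Δ-functions of Σ(a_1,…,a_n) and Σ(a_1,…,a_{n−1},a_n+α) agree on their respective critical strips: for 0 < i ≤ α, Δ((t−1)·a_n − α + i) = Δ′((t−1)·(a_n+α) − α + i). -/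
theorem stmt_16 (n : ℕ) (hn : 3 ≤ n) (a : Fin (n - 1) → ℤ) (an : ℤ)
    (ha : ∀ i, 2 ≤ a i) (han : 2 ≤ an)
    (hcop : ∀ i j, i ≠ j → IsCoprime (a i) (a j))
    (hcopn : ∀ i, IsCoprime (a i) an)
    (α P : ℤ) (hα : α = ∏ i, a i) (hP : P = α * an)
    (e0 : ℤ) (b : Fin (n - 1) → ℤ) (bn : ℤ)
    (hb : ∀ i, 1 ≤ b i ∧ b i < a i) (hbn : 1 ≤ bn ∧ bn < an)
    (heq : e0 * P + (∑ i, b i * (P / a i)) + bn * α = -1)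
    (Δ : ℤ → ℤ)
    (hΔ : ∀ x : ℤ, Δ x = 1 + |e0| * x -
      ((∑ i, ⌈(x * b i : ℚ) / (a i : ℚ)⌉) + ⌈(x * bn : ℚ) / (an : ℚ)⌉))
    -- the modified Seifert data with last fiber an' = an + α
    (an' P' : ℤ) (han' : an' = an + α) (hP' : P' = α * an')
    (e0' : ℤ) (b' : Fin (n - 1) → ℤ) (bn' : ℤ)
    (hb' : ∀ i, 1 ≤ b' i ∧ b' i < a i) (hbn' : 1 ≤ bn' ∧ bn' < an')
    (heq' : e0' * P' + (∑ i, b' i * (P' / a i)) + bn' * α = -1)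
    (Δ' : ℤ → ℤ)
    (hΔ' : ∀ x : ℤ, Δ' x = 1 + |e0'| * x -
      ((∑ i, ⌈(x * b' i : ℚ) / (a i : ℚ)⌉) + ⌈(x * bn' : ℚ) / (an' : ℚ)⌉))
    (t : ℤ) (ht : 2 * t = ((n : ℤ) - 2) * α - (∑ i, α / a i) + 1) :
    ∀ i : ℤ, 0 < i → i ≤ α →
      Δ ((t - 1) * an - α + i) = Δ' ((t - 1) * (an + α) - α + i) := by
  -- basic positivity
  have ha0 : ∀ i, (0:ℤ) < a i := fun i => by linarith [ha i]
  have hα0 : 0 < α := by rw [hα]; exact Finset.prod_pos (fun i _ => ha0 i)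
  have han0 : (0:ℤ) < an := by linarith
  have han'0 : (0:ℤ) < an' := by rw [han']; linarith
  have hdvd : ∀ i, a i ∣ α := fun i => hα ▸ Finset.dvd_prod_of_mem a (Finset.mem_univ i)
  have hc : ∀ i, a i * (α / a i) = α := fun i => Int.mul_ediv_cancel' (hdvd i)
  have hq0 : ∀ i, 0 < α / a i := by
    intro i
    by_contra h
    push_neg at h
    nlinarith [hc i, ha0 i]
  -- rewrite the Seifert equations
  have hPdiv : ∀ i, P / a i = (α / a i) * an := by
    intro i
    rw [hP]
    conv_lhs => rw [← hc i, mul_assoc, Int.mul_ediv_cancel_left _ (ha0 i).ne']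
  have hP'div : ∀ i, P' / a i = (α / a i) * an' := by
    intro i
    rw [hP']
    conv_lhs => rw [← hc i, mul_assoc, Int.mul_ediv_cancel_left _ (ha0 i).ne']
  set S : ℤ := ∑ i, b i * (α / a i) with hS
  set S' : ℤ := ∑ i, b' i * (α / a i) with hS'
  have heqn : e0 * α * an + S * an + bn * α = -1 := by
    have : (∑ i, b i * (P / a i)) = S * an := by
      rw [hS, Finset.sum_mul]
      exact Finset.sum_congr rfl (fun i _ => by rw [hPdiv i]; ring)
    rw [this, hP] at heq; linear_combination heq
  have heqn' : e0' * α * an' + S' * an' + bn' * α = -1 := by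
    have : (∑ i, b' i * (P' / a i)) = S' * an' := by
      rw [hS', Finset.sum_mul]
      exact Finset.sum_congr rfl (fun i _ => by rw [hP'div i]; ring)
    rw [this, hP'] at heq'; linear_combination heq'
  -- b' = b
  have hb'b : ∀ j, b' j = b j := by
    intro j
    have hquot : α / a j = ∏ i ∈ Finset.univ.erase j, a i := by
      have hprodrep : α = a j * ∏ i ∈ Finset.univ.erase j, a i := by
        rw [hα, ← Finset.prod_erase_mul _ _ (Finset.mem_univ j)]; ring
      rw [hprodrep, Int.mul_ediv_cancel_left _ (ha0 j).ne']
    have copq : IsCoprime (a j) ((α / a j) * an) := by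
      apply IsCoprime.mul_right _ (hcopn j)
      rw [hquot]
      exact IsCoprime.prod_right (fun i hi => hcop j i (fun h => (Finset.mem_erase.mp hi).1 h.symm))
    have hdq : ∀ i : Fin (n-1), i ≠ j → a j ∣ α / a i := by
      intro i hij
      have h0 : a j ∣ a i * (α / a i) := by rw [hc i]; exact hdvd j
      exact (IsCoprime.dvd_of_dvd_mul_left (hcop j i (fun h => hij h.symm)) h0)
    -- a j divides b j * ((α/a j)*an) + 1
    have key : ∀ (e bN : ℤ) (bb : Fin (n-1) → ℤ) (aN : ℤ),
        (e * α * aN + (∑ i, bb i * (α / a i)) * aN + bN * α = -1) →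
        a j ∣ bb j * ((α / a j) * aN) + 1 := by
      intro e bN bb aN hE
      have hsplit : (∑ i, bb i * (α / a i)) =
          bb j * (α / a j) + ∑ i ∈ Finset.univ.erase j, bb i * (α / a i) := by
        rw [← Finset.add_sum_erase _ _ (Finset.mem_univ j)]
      have hrest : a j ∣ (∑ i ∈ Finset.univ.erase j, bb i * (α / a i)) * aN := by
        apply dvd_mul_of_dvd_left
        apply Finset.dvd_sum
        intro i hi
        exact dvd_mul_of_dvd_right (hdq i (Finset.mem_erase.mp hi).1) _
      have h1 : a j ∣ e * α * aN :=
        dvd_mul_of_dvd_left (dvd_mul_of_dvd_right (hdvd j) e) aN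
      have h2 : a j ∣ bN * α := dvd_mul_of_dvd_right (hdvd j) bN
      have : bb j * ((α / a j) * aN) + 1 =
          -(e * α * aN) - (∑ i ∈ Finset.univ.erase j, bb i * (α / a i)) * aN - bN * α := by
        rw [hsplit] at hE; linarith [hE]
      rw [this]
      exact dvd_sub (dvd_sub (dvd_neg.mpr h1) hrest) h2
    have k1 := key e0 bn b an heqn
    have k2 := key e0' bn' b' an' heqn'
    have hdiff : a j ∣ (b j - b' j) * ((α / a j) * an) := by
      have h3 : a j ∣ (α / a j) * α := dvd_mul_of_dvd_right (hdvd j) _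
      have : (b j - b' j) * ((α / a j) * an) =
          (b j * ((α / a j) * an) + 1) - (b' j * ((α / a j) * an') + 1)
          + b' j * ((α / a j) * α) := by rw [han']; ring
      rw [this]
      exact dvd_add (dvd_sub k1 k2) (dvd_mul_of_dvd_right h3 (b' j))
    have hdiff2 : a j ∣ b j - b' j := IsCoprime.dvd_of_dvd_mul_right copq hdiff
    obtain ⟨u, hu⟩ := hdiff2
    have hbj := hb j
    have hb'j := hb' j
    have hu1 : u < 1 := by nlinarith [ha0 j]
    have hu2 : -1 < u := by nlinarith [ha0 j]
    have : u = 0 := by omega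
    rw [this, mul_zero] at hu
    omega
  have hSS : S' = S := by
    rw [hS, hS']
    exact Finset.sum_congr rfl (fun i _ => by rw [hb'b i])
  rw [hSS] at heqn'
  -- the integer m
  set m : ℤ := -e0 * α - S with hm_def
  have hm : m * an = bn * α + 1 := by rw [hm_def]; linarith [heqn]
  have hS0 : 0 ≤ S := by
    rw [hS]
    apply Finset.sum_nonneg
    intro i _
    exact mul_nonneg (by linarith [(hb i).1]) (hq0 i).le
  have hm1 : 1 ≤ m := by nlinarith [hbn.1]
  have hm2 : m ≤ α := by nlinarith [hbn.2, hbn.1]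
  -- bn' = bn + m
  have hbn'eq : bn' = bn + m := by
    have h1 : an' ∣ bn' * α + 1 := ⟨-e0' * α - S, by linarith [heqn']⟩
    have hB : (bn + m) * α + 1 = m * an' := by rw [han']; linarith [hm]
    have h2 : an' ∣ (bn' - (bn + m)) * α := by
      have : (bn' - (bn + m)) * α = (bn' * α + 1) - ((bn + m) * α + 1) := by ring
      rw [this, hB]
      exact dvd_sub h1 (dvd_mul_left an' m)
    have copαan : IsCoprime α an := hα ▸ IsCoprime.prod_left (fun i _ => hcopn i)
    have cop : IsCoprime an' α := by
      rw [han']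
      simpa using copαan.symm.add_mul_right_left 1
    have h3 : an' ∣ bn' - (bn + m) := IsCoprime.dvd_of_dvd_mul_right cop h2
    obtain ⟨u, hu⟩ := h3
    have e1 : an' * u = bn' - bn - m := by linarith [hu]
    have hu1 : u < 1 := by
      have h5 : an' * u < an' * 1 := by
        rw [mul_one]; linarith [hbn'.2, hbn.1, hm1, e1]
      exact lt_of_mul_lt_mul_left h5 han'0.le
    have hu2 : -1 < u := by
      have h5 : an' * (-1) < an' * u := by linarith [e1, hbn'.1, hbn.2, hm2, han'0]
      exact lt_of_mul_lt_mul_left h5 han'0.le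
    have : u = 0 := by omega
    rw [this, mul_zero] at hu
    omega
  -- e0' = e0
  have he0' : e0' = e0 := by
    have key : (e0' - e0) * (α * an') = 0 := by
      have hB : (bn + m) * α + 1 = m * an' := by rw [han']; linarith [hm]
      have : bn' * α = m * an' - 1 := by rw [hbn'eq]; linarith [hB]
      rw [hm_def] at this
      linear_combination heqn' - this
    rcases mul_eq_zero.mp key with h | h
    · linarith
    · exfalso; nlinarith
  -- e0 < 0
  have he0neg : e0 < 0 := by nlinarith [hbn.1, hS0]
  have habs : |e0| = -e0 := abs_of_neg he0neg
  have habs' : |e0'| = -e0 := by rw [he0']; exact habs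
  -- main computation
  intro i hi0 hiα
  rw [hΔ, hΔ']
  set x : ℤ := (t - 1) * an - α + i with hx
  set x' : ℤ := (t - 1) * (an + α) - α + i with hx'
  have hceil : ∀ j, ⌈(x' : ℚ) * (b' j : ℚ) / (a j : ℚ)⌉ =
      ⌈(x : ℚ) * (b j : ℚ) / (a j : ℚ)⌉ + (t - 1) * (α / a j) * b j := by
    intro j
    rw [hb'b j]
    apply ceil_shift' _ _ _ _ _ _ _ 0 (ha0 j) (ha0 j) le_rfl (by linarith [ha0 j])
    rw [hx, hx']
    linear_combination (-(t - 1) * b j * a j) * hc j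
  have hsum2 : (∑ j, ⌈(x' : ℚ) * (b' j : ℚ) / (a j : ℚ)⌉) =
      (∑ j, ⌈(x : ℚ) * (b j : ℚ) / (a j : ℚ)⌉) + (t - 1) * S := by
    rw [Finset.sum_congr rfl (fun j _ => hceil j), Finset.sum_add_distrib]
    congr 1
    rw [hS, Finset.mul_sum]
    exact Finset.sum_congr rfl (fun j _ => by ring)
  have hlast : ⌈(x' : ℚ) * (bn' : ℚ) / (an' : ℚ)⌉ =
      ⌈(x : ℚ) * (bn : ℚ) / (an : ℚ)⌉ + (t - 1) * m := by
    apply ceil_shift' _ _ _ _ _ _ _ (i - α) han0 han'0 (by linarith) (by rw [han']; linarith)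
    rw [hx, hx', hbn'eq, han']
    linear_combination (i - α) * hm
  rw [hsum2, hlast, habs, habs', hx, hx', hm_def]
  ring
end
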